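/- (Key Lemma) Let G/K be a compact homogeneous manifold with normalized measure μ and let (Φ, Ψ) be a normalized complementary pair of continuous Young functions such that (i) Φ ≺ Φ₀ where Φ₀(t) = t²/2, and (ii) Ψ′(t) ≤ c₀ t^p for all t ≥ 0, for some p ≥ 1 and c₀ > 0. Then there is a constant r̄₀ > 0, depending only on Φ and the ordering ≺ (and possibly on c₀ and p) but not on Λ, such that for every finite subset Λ ⊂ Ĝ₀ and every trigonometric polynomial f_Λ(x) = ∑_{π∈Λ} d_π ∑_{i=1}^{d_π} ∑_{j=1}^{k_π} c^π_{ij} π_{ij}(x) with c^π_{ij} ∈ ℂ, one has N_Ψ(F_{f_Λ}) ≤ r̄₀ · N_Φ(f_Λ). -/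

import Mathlib

open MeasureTheory Filter
open scoped ENNReal NNReal ComplexConjugate

noncomputable section

/-- The Hilbert–Schmidt (Frobenius) norm of a complex matrix. -/
def hsNorm {n : ℕ} (A : Matrix (Fin n) (Fin n) ℂ) : ℝ :=
  Real.sqrt (∑ i, ∑ j, ‖A i j‖ ^ 2)

/-- The Schatten `p`-norm of a complex matrix (for finite `p`):
the `ℓ^p` norm of the singular values. -/
def schNorm {n : ℕ} (p : ℝ) (A : Matrix (Fin n) (Fin n) ℂ) : ℝ :=
  (∑ i, Real.sqrt ((Matrix.isHermitian_conjTranspose_mul_self A).eigenvalues i) ^ p) ^ (1 / p)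

/-- The operator norm of a complex matrix acting on Euclidean space. -/
def matOpNorm {n : ℕ} (A : Matrix (Fin n) (Fin n) ℂ) : ℝ :=
  ‖LinearMap.toContinuousLinearMap (Matrix.toEuclideanLin A)‖

/-- The `ℓ^p(Ĝ₀)` norm. -/
def lpNorm {ι : Type*} (d k : ι → ℕ) (p : ℝ≥0∞)
    (σ : (π : ι) → Matrix (Fin (d π)) (Fin (d π)) ℂ) : ℝ≥0∞ :=
  if p = ∞ then ⨆ π, ENNReal.ofReal (hsNorm (σ π) / Real.sqrt (k π))
  else (∑' π, (d π : ℝ≥0∞) * (k π : ℝ≥0∞) ^ (p.toReal * (1 / p.toReal - 1 / 2)) *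
    ENNReal.ofReal (hsNorm (σ π)) ^ p.toReal) ^ (1 / p.toReal)

/-- The Schatten-based `ℓ^p_sch(Ĝ₀)` norm. -/
def lpSchNorm {ι : Type*} (d : ι → ℕ) (p : ℝ≥0∞)
    (σ : (π : ι) → Matrix (Fin (d π)) (Fin (d π)) ℂ) : ℝ≥0∞ :=
  if p = ∞ then ⨆ π, ENNReal.ofReal (matOpNorm (σ π))
  else (∑' π, (d π : ℝ≥0∞) * ENNReal.ofReal (schNorm p.toReal (σ π)) ^ p.toReal) ^ (1 / p.toReal)

/-- A Young function: a nonzero convex function on `[0,∞)` vanishing at `0`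
and tending to `∞` at `∞`. -/
structure IsYoungFunction (Φ : ℝ → ℝ) : Prop where
  zero : Φ 0 = 0
  nonneg : ∀ x, 0 ≤ x → 0 ≤ Φ x
  convexOn : ConvexOn ℝ (Set.Ici 0) Φ
  ne_zero : ∃ x, 0 ≤ x ∧ Φ x ≠ 0
  tendsto_atTop : Tendsto Φ atTop atTop

/-- `(Φ, Ψ)` is a complementary pair of Young functions:
`Ψ y = sup {x y - Φ x : x ≥ 0}`. -/
def IsComplementaryPair (Φ Ψ : ℝ → ℝ) : Prop :=
  IsYoungFunction Φ ∧ IsYoungFunction Ψ ∧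
    ∀ y, 0 ≤ y → IsLUB {z : ℝ | ∃ x, 0 ≤ x ∧ z = x * y - Φ x} (Ψ y)

/-- The ordering `Φ₁ ≺ Φ₂` on Young functions. -/
def YoungPrec (Φ₁ Φ₂ : ℝ → ℝ) : Prop :=
  ∃ a b c e x₀ x₁ : ℝ, 0 < a ∧ 0 < b ∧ 0 < c ∧ 0 < e ∧ 0 < x₀ ∧ 0 < x₁ ∧
    (∀ x, x₀ ≤ x → Φ₁ (a * x) ≤ b * Φ₂ x) ∧
    (∀ x, 0 ≤ x → x ≤ x₁ → Φ₂ (c * x) ≤ e * Φ₁ x)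

/-- Luxemburg (gauge) norm of a real-valued function. -/
def luxNormR {X : Type*} [MeasurableSpace X] (μ : Measure X) (Φ : ℝ → ℝ) (f : X → ℝ) : ℝ :=
  sInf {lam : ℝ | 0 < lam ∧
    ∫⁻ x, ENNReal.ofReal (Φ (|f x| / lam)) ∂μ ≤ ENNReal.ofReal (Φ 1)}

/-- Luxemburg (gauge) norm of a complex-valued function. -/
def luxNorm {X : Type*} [MeasurableSpace X] (μ : Measure X) (Φ : ℝ → ℝ) (f : X → ℂ) : ℝ :=
  luxNormR μ Φ fun x => ‖f x‖

/-- Membership in the Orlicz space `L^Φ`. -/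
def MemOrlicz {X : Type*} [MeasurableSpace X] (μ : Measure X) (Φ : ℝ → ℝ) (f : X → ℂ) : Prop :=
  AEStronglyMeasurable f μ ∧
    ∃ a, 0 < a ∧ ∫⁻ x, ENNReal.ofReal (Φ (a * ‖f x‖)) ∂μ < ⊤

/-- Gauge norm of a function on `Ĝ₀` weighted by `k_π d_π`. -/
def gaugeNorm {ι : Type*} (d k : ι → ℕ) (Φ : ℝ → ℝ) (F : ι → ℝ) : ℝ :=
  sInf {lam : ℝ | 0 < lam ∧
    ∑' π, ENNReal.ofReal (Φ (F π / lam)) * (k π : ℝ≥0∞) * (d π : ℝ≥0∞) ≤ ENNReal.ofReal (Φ 1)}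

/-- Membership in the Orlicz sequence space `ℓ^Φ(Ĝ₀)`. -/
def MemOrliczSeq {ι : Type*} (d k : ι → ℕ) (Φ : ℝ → ℝ) (F : ι → ℝ) : Prop :=
  ∃ a, 0 < a ∧ ∑' π, ENNReal.ofReal (Φ (a * F π)) * (k π : ℝ≥0∞) * (d π : ℝ≥0∞) < ⊤

/-- The Fourier coefficient `f̂(π) = ∫ f(x) π(x)^* dμ(x)`. -/
def fCoeff {X : Type*} [MeasurableSpace X] {ι : Type*} (μ : Measure X) {d : ι → ℕ}
    (E : (π : ι) → X → Matrix (Fin (d π)) (Fin (d π)) ℂ) (f : X → ℂ) (π : ι) :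
    Matrix (Fin (d π)) (Fin (d π)) ℂ :=
  Matrix.of fun i j => ∫ x, f x * conj (E π x j i) ∂μ

/-- `F_f(π) = k_π^{-1/2} ‖f̂(π)‖_{HS}`. -/
def Ff {X : Type*} [MeasurableSpace X] {ι : Type*} (μ : Measure X) {d : ι → ℕ} (k : ι → ℕ)
    (E : (π : ι) → X → Matrix (Fin (d π)) (Fin (d π)) ℂ) (f : X → ℂ) (π : ι) : ℝ :=
  hsNorm (fCoeff μ E f π) / Real.sqrt (k π)

/-- The structural data of the matrix coefficients `π_{ij}` (with columns `j > k_π` set to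
zero) of the class I representations of `G` relative to `K`, viewed as functions on the
compact homogeneous manifold `X = G/K` with normalized measure `μ`: positivity of
dimensions, measurability, the vanishing-column convention, the trace identity
`∑_{ij} |π(x)_{ij}|² = k_π`, Peter–Weyl orthogonality, and Parseval's identity. -/
structure RepSystem {X : Type*} [MeasurableSpace X] {ι : Type*} (μ : Measure X)
    (d k : ι → ℕ) (E : (π : ι) → X → Matrix (Fin (d π)) (Fin (d π)) ℂ) : Prop where
  d_pos : ∀ π, 0 < d π
  k_pos : ∀ π, 0 < k π
  k_le_d : ∀ π, k π ≤ d π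
  measurable : ∀ π i j, Measurable fun x => E π x i j
  col_zero : ∀ (π : ι) (x : X) (i j : Fin (d π)), k π ≤ (j : ℕ) → E π x i j = 0
  trace_id : ∀ π x, ∑ i, ∑ j, ‖E π x i j‖ ^ 2 = (k π : ℝ)
  orth : ∀ π (i j i' j' : Fin (d π)), (j : ℕ) < k π → (j' : ℕ) < k π →
      ∫ x, E π x i j * conj (E π x i' j') ∂μ =
        if i = i' ∧ j = j' then ((d π : ℂ))⁻¹ else 0
  orth_ne : ∀ π π', π ≠ π' → ∀ i j i' j',
      ∫ x, E π x i j * conj (E π' x i' j') ∂μ = 0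
  parseval : ∀ f : X → ℂ, MemLp f 2 μ →
      HasSum (fun π => (d π : ℝ) * ∑ i, ∑ j, ‖fCoeff μ E f π i j‖ ^ 2)
        (∫ x, ‖f x‖ ^ 2 ∂μ)

/-- The trigonometric polynomial `f_Λ(x) = ∑_{π∈Λ} d_π ∑_{i,j} c^π_{ij} π_{ij}(x)`. -/
def trigPoly {X : Type*} {ι : Type*} {d : ι → ℕ}
    (E : (π : ι) → X → Matrix (Fin (d π)) (Fin (d π)) ℂ)
    (Λ : Finset ι) (c : (π : ι) → Matrix (Fin (d π)) (Fin (d π)) ℂ) : X → ℂ :=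
  fun x => ∑ π ∈ Λ, (d π : ℂ) * ∑ i, ∑ j, c π i j * E π x i j

/-- The partial Fourier series `f̃_Λ` of `f`, whose Fourier coefficients agree with those
of `f` on `Λ` and vanish outside `Λ`. -/
def fourierProj {X : Type*} [MeasurableSpace X] {ι : Type*} (μ : Measure X) {d : ι → ℕ}
    (E : (π : ι) → X → Matrix (Fin (d π)) (Fin (d π)) ℂ) (Λ : Finset ι) (f : X → ℂ) :
    X → ℂ :=
  trigPoly E Λ fun π => (fCoeff μ E f π).transpose


namespace KeyAux

variable {Φ Ψ : ℝ → ℝ}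

lemma IsYoung.le_mul (hΦ : IsYoungFunction Φ) {x y : ℝ} (hx : 0 ≤ x) (hy : 0 < y)
    (hxy : x ≤ y) : Φ x ≤ (x / y) * Φ y := by
  have ha : (0:ℝ) ≤ 1 - x / y := by
    have : x / y ≤ 1 := (div_le_one hy).mpr hxy
    linarith
  have hb : (0:ℝ) ≤ x / y := div_nonneg hx hy.le
  have hab : (1 - x / y) + x / y = 1 := by ring
  have h := hΦ.convexOn.2 (Set.mem_Ici.mpr (le_refl (0:ℝ))) (Set.mem_Ici.mpr hy.le) ha hb hab
  have hxy' : (1 - x / y) • (0:ℝ) + (x / y) • y = x := by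
    simp only [smul_eq_mul, mul_zero, zero_add]
    field_simp
  rw [hxy'] at h
  simpa [hΦ.zero] using h

lemma IsYoung.mono (hΦ : IsYoungFunction Φ) {x y : ℝ} (hx : 0 ≤ x) (hxy : x ≤ y) :
    Φ x ≤ Φ y := by
  rcases eq_or_lt_of_le (hx.trans hxy) with h | hy
  · have hx0 : x = 0 := le_antisymm (hxy.trans h.symm.le) hx
    rw [hx0, ← h]
  · calc Φ x ≤ (x / y) * Φ y := IsYoung.le_mul hΦ hx hy hxy
    _ ≤ 1 * Φ y := by
        apply mul_le_mul_of_nonneg_right _ (hΦ.nonneg y (hx.trans hxy))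
        exact (div_le_one hy).mpr hxy
    _ = Φ y := one_mul _

/-- Young's inequality for a complementary pair. -/
lemma pair_young (hpair : IsComplementaryPair Φ Ψ) {a b : ℝ} (ha : 0 ≤ a) (hb : 0 ≤ b) :
    a * b ≤ Φ a + Ψ b := by
  have h := (hpair.2.2 b hb).1 ⟨a, ha, rfl⟩
  linarith

lemma psi_one_nonneg (hpair : IsComplementaryPair Φ Ψ) : 0 ≤ Ψ 1 :=
  hpair.2.1.nonneg 1 zero_le_one

/-- Polynomial bound on `Ψ` from the derivative bound. -/
lemma psi_poly (hpair : IsComplementaryPair Φ Ψ) {p c₀ : ℝ} (hp : 1 ≤ p) (hc₀ : 0 < c₀)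
    (hΨ' : ∀ t : ℝ, 0 ≤ t → deriv Ψ t ≤ c₀ * t ^ p) :
    ∀ y : ℝ, 0 ≤ y → Ψ y ≤ (c₀ * 2 ^ p) * y ^ (p + 1) := by
  have hΨ := hpair.2.1
  intro y hy
  rcases eq_or_lt_of_le hy with h0 | hy
  · rw [← h0, Real.zero_rpow (by positivity), hΨ.zero, mul_zero]
  -- a monotone extension of Ψ
  set Ψm : ℝ → ℝ := fun t => Ψ (max t 0) with hΨm
  have hmono : Monotone Ψm := by
    intro s t hst
    exact IsYoung.mono hΨ (le_max_right _ _) (max_le_max hst (le_refl 0))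
  have hae := hmono.ae_differentiableAt
  -- find a differentiability point in (y, 2y)
  have hexists : ∃ σ ∈ Set.Ioo y (2 * y), DifferentiableAt ℝ Ψm σ := by
    by_contra hcon
    push_neg at hcon
    have hsub : Set.Ioo y (2 * y) ⊆ {x | ¬ DifferentiableAt ℝ Ψm x} := fun x hx => hcon x hx
    have h0 : MeasureTheory.volume (Set.Ioo y (2 * y)) = 0 :=
      measure_mono_null hsub (by simpa [MeasureTheory.ae_iff] using hae)
    rw [Real.volume_Ioo] at h0
    have : (2 : ℝ) * y - y > 0 := by linarith
    simp [ENNReal.ofReal_eq_zero] at h0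
    linarith
  obtain ⟨σ, hσmem, hσdiff⟩ := hexists
  have hσpos : 0 < σ := hy.trans hσmem.1
  -- Ψm = Ψ near σ
  have hEq : Ψm =ᶠ[nhds σ] Ψ := by
    filter_upwards [Ioi_mem_nhds hσpos] with t ht
    simp [hΨm, max_eq_left (le_of_lt (Set.mem_Ioi.mp ht))]
  have hdiffΨ : DifferentiableAt ℝ Ψ σ := (Filter.EventuallyEq.differentiableAt_iff hEq).mp hσdiff
  have hderiv_eq : deriv Ψ σ = deriv Ψm σ := (Filter.EventuallyEq.deriv_eq hEq).symm ▸ rfl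
  -- slope at σ dominates Ψ σ / σ
  have hslope : Ψ σ / σ ≤ deriv Ψ σ := by
    have hd : HasDerivAt Ψ (deriv Ψ σ) σ := hdiffΨ.hasDerivAt
    have htend : Tendsto (slope Ψ σ) (nhdsWithin σ (Set.Ioi σ)) (nhds (deriv Ψ σ)) := by
      apply (hasDerivAt_iff_tendsto_slope.mp hd).mono_left
      apply nhdsWithin_mono
      intro x hx
      exact ne_of_gt hx
    refine ge_of_tendsto htend ?_
    filter_upwards [self_mem_nhdsWithin] with z hz
    have hz' : σ < z := hz
    have hmono2 := hΨ.convexOn.slope_mono_adjacent (Set.mem_Ici.mpr (le_refl (0:ℝ)))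
      (Set.mem_Ici.mpr (hσpos.trans hz').le) hσpos hz'
    rw [slope_def_field]
    rw [hΨ.zero, sub_zero, sub_zero] at hmono2
    exact hmono2
  have hbound : deriv Ψ σ ≤ c₀ * σ ^ p := hΨ' σ hσpos.le
  -- slope monotonicity from 0
  have hyσ : Ψ y / y ≤ Ψ σ / σ := by
    have h1 := IsYoung.le_mul hΨ hy.le hσpos hσmem.1.le
    have h2 := mul_le_mul_of_nonneg_right h1 hσpos.le
    rw [div_mul_eq_mul_div, div_mul_cancel₀ _ hσpos.ne'] at h2
    rw [div_le_div_iff₀ hy hσpos]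
    linarith
  have h2 : Ψ y ≤ y * (c₀ * σ ^ p) := by
    have := hyσ.trans (hslope.trans hbound)
    calc Ψ y = (Ψ y / y) * y := by field_simp
    _ ≤ (c₀ * σ ^ p) * y := mul_le_mul_of_nonneg_right this hy.le
    _ = y * (c₀ * σ ^ p) := mul_comm _ _
  have h3 : σ ^ p ≤ (2 * y) ^ p :=
    Real.rpow_le_rpow hσpos.le hσmem.2.le (by linarith)
  calc Ψ y ≤ y * (c₀ * σ ^ p) := h2
  _ ≤ y * (c₀ * (2 * y) ^ p) := by
      apply mul_le_mul_of_nonneg_left _ hy.le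
      exact mul_le_mul_of_nonneg_left h3 hc₀.le
  _ = (c₀ * 2 ^ p) * y ^ (p + 1) := by
      rw [Real.mul_rpow (by norm_num) hy.le, Real.rpow_add hy, Real.rpow_one]
      ring

/-- Global power lower bound on `Φ` from the polynomial bound on `Ψ`. -/
lemma phi_q_lower (hpair : IsComplementaryPair Φ Ψ) {p c₁ : ℝ} (hp : 1 ≤ p) (hc₁ : 0 < c₁)
    (hpoly : ∀ y : ℝ, 0 ≤ y → Ψ y ≤ c₁ * y ^ (p + 1)) :
    ∀ x : ℝ, 0 ≤ x →
      (p / (p + 1)) * (c₁ * (p + 1)) ^ (-(1/p)) * x ^ (1 + 1/p) ≤ Φ x := by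
  intro x hx
  have hppos : 0 < p := lt_of_lt_of_le one_pos hp
  have hp1 : 0 < p + 1 := by linarith
  rcases eq_or_lt_of_le hx with h0 | hx
  · rw [← h0, Real.zero_rpow (by positivity), mul_zero]
    exact le_of_eq (hpair.1.zero).symm
  set ystar : ℝ := (x / (c₁ * (p + 1))) ^ (1/p) with hystar
  have hyq : 0 < x / (c₁ * (p+1)) := div_pos hx (by positivity)
  have hypos : 0 < ystar := Real.rpow_pos_of_pos hyq _
  have hyp : ystar ^ p = x / (c₁ * (p + 1)) := by
    rw [hystar, ← Real.rpow_mul hyq.le, one_div_mul_cancel hppos.ne', Real.rpow_one]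
  have hY := pair_young hpair hx.le hypos.le
  have hpoly' : Ψ ystar ≤ c₁ * ystar ^ (p + 1) := hpoly ystar hypos.le
  have hident : c₁ * ystar ^ (p + 1) = x * ystar / (p + 1) := by
    rw [Real.rpow_add hypos, Real.rpow_one, hyp]
    field_simp
  have hmain : x * ystar * (p / (p + 1)) ≤ Φ x := by
    have h5 : x * ystar - x * ystar / (p+1) ≤ Φ x := by linarith
    have : x * ystar * (p / (p + 1)) = x * ystar - x * ystar / (p+1) := by
      field_simp
      ring
    linarith
  have hxy : x * ystar = x ^ (1 + 1/p) * (c₁ * (p + 1)) ^ (-(1/p)) := by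
    rw [hystar, Real.div_rpow hx.le (by positivity), Real.rpow_add hx, Real.rpow_one,
      Real.rpow_neg (by positivity)]
    ring
  calc (p / (p + 1)) * (c₁ * (p + 1)) ^ (-(1/p)) * x ^ (1 + 1/p)
      = x * ystar * (p / (p + 1)) := by rw [hxy]; ring
  _ ≤ Φ x := hmain

end KeyAux
namespace KeyAux

open MeasureTheory

section HS

variable {n : ℕ}

def mEuc (A : Matrix (Fin n) (Fin n) ℂ) : EuclideanSpace ℂ (Fin n × Fin n) :=
  WithLp.toLp 2 (fun ij : Fin n × Fin n => A ij.1 ij.2)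

lemma hsNorm_eq (A : Matrix (Fin n) (Fin n) ℂ) : hsNorm A = ‖mEuc A‖ := by
  rw [EuclideanSpace.norm_eq, hsNorm]
  congr 1
  rw [Fintype.sum_prod_type]
  simp [mEuc]

lemma hsNorm_nonneg (A : Matrix (Fin n) (Fin n) ℂ) : 0 ≤ hsNorm A := Real.sqrt_nonneg _

lemma hsNorm_add_le (A B : Matrix (Fin n) (Fin n) ℂ) :
    hsNorm (A + B) ≤ hsNorm A + hsNorm B := by
  have : mEuc (A + B) = mEuc A + mEuc B := by
    ext ij
    simp [mEuc, Matrix.add_apply]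
  rw [hsNorm_eq, hsNorm_eq, hsNorm_eq, this]
  exact norm_add_le _ _

lemma hsNorm_smul (a : ℂ) (A : Matrix (Fin n) (Fin n) ℂ) :
    hsNorm (a • A) = norm a * hsNorm A := by
  have : mEuc (a • A) = a • mEuc A := by
    ext ij
    simp [mEuc, Matrix.smul_apply]
  rw [hsNorm_eq, hsNorm_eq, this, norm_smul]

lemma hsNorm_sq (A : Matrix (Fin n) (Fin n) ℂ) :
    hsNorm A ^ 2 = ∑ i, ∑ j, norm (A i j) ^ 2 := by
  rw [hsNorm, Real.sq_sqrt]
  positivity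

lemma hsNorm_zero : hsNorm (0 : Matrix (Fin n) (Fin n) ℂ) = 0 := by
  simp [hsNorm]

end HS

section Int

variable {X : Type*} [MeasurableSpace X] (μ : Measure X) [IsProbabilityMeasure μ]

lemma integrable_bddC {g : X → ℂ} (hg : Measurable g) (B : ℝ)
    (h : ∀ x, norm (g x) ≤ B) : Integrable g μ := by
  have hm : MemLp g 1 μ := by
    apply MemLp.of_bound hg.aestronglyMeasurable B
    filter_upwards with x
    simpa using h x
  exact (memLp_one_iff_integrable).mp hm

lemma integrable_bddR {g : X → ℝ} (hg : Measurable g) (B : ℝ)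
    (h : ∀ x, |g x| ≤ B) : Integrable g μ := by
  have hm : MemLp g 1 μ := by
    apply MemLp.of_bound hg.aestronglyMeasurable B
    filter_upwards with x
    simpa using h x
  exact (memLp_one_iff_integrable).mp hm

/-- weighted Cauchy–Schwarz for integrals -/
lemma weighted_cs {w v : X → ℝ} (hw0 : ∀ x, 0 ≤ w x) (hv0 : ∀ x, 0 ≤ v x)
    (hw : Integrable w μ) (hwv : Integrable (fun x => w x * v x) μ)
    (hwv2 : Integrable (fun x => w x * v x ^ 2) μ) :
    (∫ x, w x * v x ∂μ) ^ 2 ≤ (∫ x, w x ∂μ) * ∫ x, w x * v x ^ 2 ∂μ := by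
  set I0 := ∫ x, w x ∂μ
  set I1 := ∫ x, w x * v x ∂μ
  set I2 := ∫ x, w x * v x ^ 2 ∂μ
  have hI0 : 0 ≤ I0 := integral_nonneg hw0
  rcases eq_or_lt_of_le hI0 with h0 | h0
  · -- w vanishes a.e.
    have hwz : w =ᵐ[μ] 0 := by
      rw [← integral_eq_zero_iff_of_nonneg hw0 hw]
      exact h0.symm
    have h1 : I1 = 0 := by
      rw [show I1 = ∫ x, w x * v x ∂μ from rfl]
      rw [integral_eq_zero_iff_of_nonneg (fun x => mul_nonneg (hw0 x) (hv0 x)) hwv]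
      filter_upwards [hwz] with x hx
      simp [hx]
    have h2 : I2 = 0 := by
      rw [show I2 = ∫ x, w x * v x ^ 2 ∂μ from rfl]
      rw [integral_eq_zero_iff_of_nonneg (fun x => mul_nonneg (hw0 x) (sq_nonneg _)) hwv2]
      filter_upwards [hwz] with x hx
      simp [hx]
    rw [h1, h2]
    simp
  · set r := I1 / I0 with hr
    have key : 0 ≤ I2 - 2 * r * I1 + r ^ 2 * I0 := by
      have hpt : ∀ x, 0 ≤ w x * (v x - r) ^ 2 := fun x => mul_nonneg (hw0 x) (sq_nonneg _)
      have hA : Integrable (fun x => w x * v x ^ 2 - 2 * r * (w x * v x)) μ :=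
        hwv2.sub (hwv.const_mul _)
      have hB : Integrable (fun x => r ^ 2 * w x) μ := hw.const_mul _
      have h3 : 0 ≤ ∫ x, w x * (v x - r) ^ 2 ∂μ := integral_nonneg hpt
      have h4 : ∫ x, w x * (v x - r) ^ 2 ∂μ = I2 - 2 * r * I1 + r ^ 2 * I0 := by
        have heq : (fun x => w x * (v x - r) ^ 2)
            = fun x => (w x * v x ^ 2 - 2 * r * (w x * v x)) + r ^ 2 * w x := by
          funext x; ring
        rw [heq, integral_add hA hB, integral_sub hwv2 (hwv.const_mul _),
          integral_const_mul, integral_const_mul]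
      linarith [h4 ▸ h3]
    have : I2 - I1 ^ 2 / I0 ≥ 0 := by
      have hr1 : r * I1 = I1 ^ 2 / I0 := by
        rw [hr]; field_simp
      have hr2 : r ^ 2 * I0 = I1 ^ 2 / I0 := by
        rw [hr]; field_simp
      nlinarith [key]
    have := mul_le_mul_of_nonneg_right (le_of_sub_nonneg (by linarith : (0:ℝ) ≤ I2 - I1^2/I0)) h0.le
    calc I1 ^ 2 = I1 ^ 2 / I0 * I0 := by field_simp
    _ ≤ I2 * I0 := by nlinarith [this]
    _ = I0 * I2 := mul_comm _ _

end Int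

end KeyAux
set_option linter.unusedSectionVars false

namespace KeyAux2

open MeasureTheory KeyAux

variable {X : Type*} [MeasurableSpace X] {ι : Type*} {μ : Measure X} [IsProbabilityMeasure μ]
  {d k : ι → ℕ} {E : (π : ι) → X → Matrix (Fin (d π)) (Fin (d π)) ℂ}

lemma measurable_cabs {u : X → ℂ} (hm : Measurable u) :
    Measurable fun x => norm (u x) := by
  have : (fun x => norm (u x)) = fun x => ‖u x‖ :=
    funext fun x => rfl
  rw [this]
  exact hm.norm

lemma fCoeff_apply {u : X → ℂ} (π : ι) (i j : Fin (d π)) :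
    fCoeff μ E u π i j = ∫ x, u x * (starRingEnd ℂ) (E π x j i) ∂μ := rfl

lemma fCoeff_smul (a : ℂ) (u : X → ℂ) (π : ι) :
    fCoeff μ E (fun x => a * u x) π = a • fCoeff μ E u π := by
  ext i j
  rw [Matrix.smul_apply, fCoeff_apply, fCoeff_apply, smul_eq_mul, ← integral_const_mul]
  congr 1
  funext x
  ring

lemma Ff_smul (a : ℂ) (u : X → ℂ) (π : ι) :
    Ff μ k E (fun x => a * u x) π = norm a * Ff μ k E u π := by
  rw [Ff, Ff, fCoeff_smul, hsNorm_smul]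
  ring

lemma Ff_nonneg (u : X → ℂ) (π : ι) : 0 ≤ Ff μ k E u π :=
  div_nonneg (hsNorm_nonneg _) (Real.sqrt_nonneg _)

lemma nonemptyX (μ : Measure X) [IsProbabilityMeasure μ] : Nonempty X := by
  by_contra h
  rw [not_nonempty_iff] at h
  have h1 : μ Set.univ = 1 := measure_univ
  rw [Set.univ_eq_empty_iff.mpr h, measure_empty] at h1
  exact zero_ne_one h1

variable (hsys : RepSystem μ d k E)
include hsys

lemma E_abs_le (π : ι) (x : X) (i j : Fin (d π)) :
    norm (E π x i j) ≤ Real.sqrt (k π) := by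
  apply Real.le_sqrt_of_sq_le
  rw [← hsys.trace_id π x]
  have h1 : norm (E π x i j) ^ 2 ≤ ∑ j', norm (E π x i j') ^ 2 :=
    Finset.single_le_sum (f := fun j' => norm (E π x i j') ^ 2)
      (fun j' _ => by positivity) (Finset.mem_univ j)
  refine h1.trans (Finset.single_le_sum (f := fun i' => ∑ j', norm (E π x i' j') ^ 2)
    (fun i' _ => ?_) (Finset.mem_univ i))
  positivity

lemma integrable_mul_conjE {u : X → ℂ} (hm : Measurable u) {B : ℝ}
    (hb : ∀ x, norm (u x) ≤ B) (π : ι) (i j : Fin (d π)) :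
    Integrable (fun x => u x * (starRingEnd ℂ) (E π x j i)) μ := by
  have hconj : Measurable fun x => (starRingEnd ℂ) (E π x j i) :=
    (RCLike.continuous_conj.measurable).comp (hsys.measurable π j i)
  apply integrable_bddC μ (hm.mul hconj) (B * Real.sqrt (k π))
  intro x
  rw [Pi.mul_apply, norm_mul, Complex.norm_conj]
  exact mul_le_mul (hb x) (E_abs_le hsys π x j i) (norm_nonneg _)
    ((norm_nonneg _).trans (hb x))

lemma fCoeff_add {v w : X → ℂ} (hvm : Measurable v) (hwm : Measurable w) {Bv Bw : ℝ}
    (hbv : ∀ x, norm (v x) ≤ Bv) (hbw : ∀ x, norm (w x) ≤ Bw) (π : ι) :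
    fCoeff μ E (fun x => v x + w x) π = fCoeff μ E v π + fCoeff μ E w π := by
  ext i j
  rw [Matrix.add_apply, fCoeff_apply, fCoeff_apply, fCoeff_apply]
  rw [← integral_add (integrable_mul_conjE hsys hvm hbv π i j)
    (integrable_mul_conjE hsys hwm hbw π i j)]
  congr 1
  funext x
  ring

lemma sqrt_k_pos (π : ι) : 0 < Real.sqrt (k π) := by
  apply Real.sqrt_pos.mpr
  exact_mod_cast hsys.k_pos π

lemma integrable_absE2 {u : X → ℂ} (hm : Measurable u) {B : ℝ}
    (hb : ∀ x, norm (u x) ≤ B) (hB0 : 0 ≤ B) (π : ι) (i j : Fin (d π)) :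
    Integrable (fun x => norm (u x) * norm (E π x j i) ^ 2) μ := by
  apply integrable_bddR μ ((measurable_cabs hm).mul
    ((measurable_cabs (hsys.measurable π j i)).pow_const 2)) (B * (k π : ℝ))
  intro x
  rw [Pi.mul_apply, abs_of_nonneg (mul_nonneg (norm_nonneg _) (sq_nonneg _))]
  apply mul_le_mul (hb x) _ (sq_nonneg _) hB0
  calc norm (E π x j i) ^ 2 ≤ Real.sqrt (k π) ^ 2 :=
        pow_le_pow_left₀ (norm_nonneg _) (E_abs_le hsys π x j i) 2
  _ = (k π : ℝ) := Real.sq_sqrt (by positivity)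

/-- `L¹ → ℓ^∞` bound. -/
lemma hs_le_L1 {u : X → ℂ} (hm : Measurable u) {B : ℝ}
    (hb : ∀ x, norm (u x) ≤ B) (π : ι) :
    hsNorm (fCoeff μ E u π) ≤ Real.sqrt (k π) * ∫ x, norm (u x) ∂μ := by
  have hB0 : 0 ≤ B := by
    have : Nonempty X := nonemptyX μ
    exact (norm_nonneg _).trans (hb Classical.ofNonempty)
  set I0 := ∫ x, norm (u x) ∂μ with hI0def
  have hI0 : 0 ≤ I0 := integral_nonneg fun x => norm_nonneg _
  have habsint : Integrable (fun x => norm (u x)) μ :=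
    integrable_bddR μ (measurable_cabs hm) B fun x => by
      rw [abs_of_nonneg (norm_nonneg _)]; exact hb x
  have hkey : ∑ i, ∑ j, norm (fCoeff μ E u π i j) ^ 2 ≤ (k π : ℝ) * I0 ^ 2 := by
    have hentry : ∀ i j : Fin (d π), norm (fCoeff μ E u π i j) ^ 2 ≤
        I0 * ∫ x, norm (u x) * norm (E π x j i) ^ 2 ∂μ := by
      intro i j
      have h1 : norm (fCoeff μ E u π i j) ≤
          ∫ x, norm (u x) * norm (E π x j i) ∂μ := by
        rw [fCoeff_apply]
        calc norm (∫ x, u x * (starRingEnd ℂ) (E π x j i) ∂μ)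
            = ‖∫ x, u x * (starRingEnd ℂ) (E π x j i) ∂μ‖ := rfl
        _ ≤ ∫ x, ‖u x * (starRingEnd ℂ) (E π x j i)‖ ∂μ := norm_integral_le_integral_norm _
        _ = ∫ x, norm (u x) * norm (E π x j i) ∂μ := by
            congr 1
            funext x
            rw [norm_mul, Complex.norm_conj]
      have h2 : norm (fCoeff μ E u π i j) ^ 2 ≤
          (∫ x, norm (u x) * norm (E π x j i) ∂μ) ^ 2 :=
        pow_le_pow_left₀ (norm_nonneg _) h1 2
      refine h2.trans ?_
      apply weighted_cs μ (fun x => norm_nonneg _) (fun x => norm_nonneg _)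
        habsint
      · apply integrable_bddR μ ((measurable_cabs hm).mul
          (measurable_cabs (hsys.measurable π j i))) (B * Real.sqrt (k π))
        intro x
        rw [Pi.mul_apply, abs_of_nonneg (mul_nonneg (norm_nonneg _) (norm_nonneg _))]
        exact mul_le_mul (hb x) (E_abs_le hsys π x j i) (norm_nonneg _) hB0
      · exact integrable_absE2 hsys hm hb hB0 π i j
    calc ∑ i, ∑ j, norm (fCoeff μ E u π i j) ^ 2
        ≤ ∑ i : Fin (d π), ∑ j : Fin (d π),
          I0 * ∫ x, norm (u x) * norm (E π x j i) ^ 2 ∂μ :=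
          Finset.sum_le_sum fun i _ => Finset.sum_le_sum fun j _ => hentry i j
    _ = I0 * ∑ i : Fin (d π), ∑ j : Fin (d π),
          ∫ x, norm (u x) * norm (E π x j i) ^ 2 ∂μ := by
          simp only [← Finset.mul_sum]
    _ = I0 * ∫ x, ∑ i : Fin (d π), ∑ j : Fin (d π),
          norm (u x) * norm (E π x j i) ^ 2 ∂μ := by
          congr 1
          rw [integral_finset_sum _ (fun i _ => integrable_finset_sum _
            (fun j _ => integrable_absE2 hsys hm hb hB0 π i j))]
          refine Finset.sum_congr rfl fun i _ => ?_
          rw [integral_finset_sum _ (fun j _ => integrable_absE2 hsys hm hb hB0 π i j)]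
    _ = I0 * ∫ x, norm (u x) * (k π : ℝ) ∂μ := by
          congr 1
          apply integral_congr_ae
          filter_upwards with x
          simp only [← Finset.mul_sum]
          congr 1
          rw [Finset.sum_comm]
          exact hsys.trace_id π x
    _ = (k π : ℝ) * I0 ^ 2 := by
          rw [integral_mul_const]
          ring
  calc hsNorm (fCoeff μ E u π) = Real.sqrt (∑ i, ∑ j, norm (fCoeff μ E u π i j) ^ 2) := rfl
  _ ≤ Real.sqrt ((k π : ℝ) * I0 ^ 2) := Real.sqrt_le_sqrt hkey
  _ = Real.sqrt (k π) * I0 := by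
      rw [Real.sqrt_mul (by positivity), Real.sqrt_sq hI0]

/-- `Parseval` partial-sum inequality. -/
lemma parseval_partial {v : X → ℂ} (hv : MemLp v 2 μ) (S : Finset ι) :
    ∑ π ∈ S, (k π : ℝ) * (d π : ℝ) * Ff μ k E v π ^ 2 ≤
      ∫ x, norm (v x) ^ 2 ∂μ := by
  have h := hsys.parseval v hv
  have heach : ∀ π : ι, (k π : ℝ) * (d π : ℝ) * Ff μ k E v π ^ 2 =
      (d π : ℝ) * ∑ i, ∑ j, norm (fCoeff μ E v π i j) ^ 2 := by
    intro π
    have hk : (0:ℝ) < (k π : ℝ) := by exact_mod_cast hsys.k_pos π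
    rw [Ff, div_pow, Real.sq_sqrt hk.le, hsNorm_sq]
    field_simp
  calc ∑ π ∈ S, (k π : ℝ) * (d π : ℝ) * Ff μ k E v π ^ 2
      = ∑ π ∈ S, (d π : ℝ) * ∑ i, ∑ j, norm (fCoeff μ E v π i j) ^ 2 :=
        Finset.sum_congr rfl fun π _ => heach π
  _ ≤ ∫ x, norm (v x) ^ 2 ∂μ := by
        refine sum_le_hasSum S (fun π _ => ?_) h
        positivity

end KeyAux2
namespace KeyAux2

open MeasureTheory KeyAux

variable {X : Type*} [MeasurableSpace X] {ι : Type*} {μ : Measure X} [IsProbabilityMeasure μ]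
  {d k : ι → ℕ} {E : (π : ι) → X → Matrix (Fin (d π)) (Fin (d π)) ℂ}
  {Φ Ψ : ℝ → ℝ}

variable (hsys : RepSystem μ d k E)
include hsys

lemma trigPoly_measurable (Λ : Finset ι) (c : (π : ι) → Matrix (Fin (d π)) (Fin (d π)) ℂ) :
    Measurable (trigPoly E Λ c) := by
  apply Finset.measurable_sum
  intro π _
  apply Measurable.const_mul
  apply Finset.measurable_sum
  intro i _
  apply Finset.measurable_sum
  intro j _
  exact (hsys.measurable π i j).const_mul _

lemma trigPoly_bound (Λ : Finset ι) (c : (π : ι) → Matrix (Fin (d π)) (Fin (d π)) ℂ) (x : X) :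
    norm (trigPoly E Λ c x) ≤
      ∑ π ∈ Λ, (d π : ℝ) * ∑ i, ∑ j, norm (c π i j) * Real.sqrt (k π) := by
  rw [trigPoly]
  refine (norm_sum_le _ _).trans (Finset.sum_le_sum fun π _ => ?_)
  rw [norm_mul, Complex.norm_natCast]
  apply mul_le_mul_of_nonneg_left _ (Nat.cast_nonneg _)
  refine (norm_sum_le _ _).trans (Finset.sum_le_sum fun i _ => ?_)
  refine (norm_sum_le _ _).trans (Finset.sum_le_sum fun j _ => ?_)
  rw [norm_mul]
  exact mul_le_mul_of_nonneg_left (E_abs_le hsys π x i j) (norm_nonneg _)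

lemma fCoeff_trigPoly_not_mem (Λ : Finset ι) (c : (π : ι) → Matrix (Fin (d π)) (Fin (d π)) ℂ)
    (π : ι) (hπ : π ∉ Λ) : fCoeff μ E (trigPoly E Λ c) π = 0 := by
  ext i j
  rw [fCoeff_apply]
  have hrw : (fun x => trigPoly E Λ c x * (starRingEnd ℂ) (E π x j i)) =
      fun x => ∑ π' ∈ Λ, ∑ i', ∑ j',
        ((d π' : ℂ) * c π' i' j') * (E π' x i' j' * (starRingEnd ℂ) (E π x j i)) := by
    funext x
    rw [trigPoly, Finset.sum_mul]
    refine Finset.sum_congr rfl fun π' _ => ?_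
    rw [Finset.mul_sum, Finset.sum_mul]
    refine Finset.sum_congr rfl fun i' _ => ?_
    rw [Finset.mul_sum, Finset.sum_mul]
    refine Finset.sum_congr rfl fun j' _ => ?_
    ring
  rw [hrw]
  have hintEE : ∀ (π' : ι) (i' j' : Fin (d π')),
      Integrable (fun x => E π' x i' j' * (starRingEnd ℂ) (E π x j i)) μ := by
    intro π' i' j'
    exact integrable_mul_conjE hsys (hsys.measurable π' i' j')
      (fun x => E_abs_le hsys π' x i' j') π i j
  rw [integral_finset_sum _ (fun π' _ => (integrable_finset_sum _ (fun i' _ =>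
    integrable_finset_sum _ (fun j' _ => (hintEE π' i' j').const_mul _))))]
  rw [Matrix.zero_apply]
  refine Finset.sum_eq_zero fun π' hπ' => ?_
  rw [integral_finset_sum _ (fun i' _ =>
    integrable_finset_sum _ (fun j' _ => (hintEE π' i' j').const_mul _))]
  refine Finset.sum_eq_zero fun i' _ => ?_
  rw [integral_finset_sum _ (fun j' _ => (hintEE π' i' j').const_mul _)]
  refine Finset.sum_eq_zero fun j' _ => ?_
  rw [integral_const_mul, hsys.orth_ne π' π (fun h => hπ (h ▸ hπ')) i' j' j i, mul_zero]

lemma Ff_trigPoly_not_mem (Λ : Finset ι) (c : (π : ι) → Matrix (Fin (d π)) (Fin (d π)) ℂ)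
    (π : ι) (hπ : π ∉ Λ) : Ff μ k E (trigPoly E Λ c) π = 0 := by
  rw [Ff, fCoeff_trigPoly_not_mem hsys Λ c π hπ, hsNorm_zero, zero_div]

/-- Duality bound: `F_u(π) ≤ ∫ Φ(|u|) + Ψ(1)`. -/
lemma Ff_le_mod (hpair : IsComplementaryPair Φ Ψ) {u : X → ℂ} (hm : Measurable u) {B : ℝ}
    (hb : ∀ x, norm (u x) ≤ B)
    (hIint : Integrable (fun x => Φ (norm (u x))) μ) (π : ι) :
    Ff μ k E u π ≤ (∫ x, Φ (norm (u x)) ∂μ) + Ψ 1 := by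
  have hΦy := hpair.1
  have hΨy := hpair.2.1
  have hB0 : 0 ≤ B := by
    have : Nonempty X := nonemptyX μ
    exact (norm_nonneg _).trans (hb Classical.ofNonempty)
  have hIΦ0 : 0 ≤ ∫ x, Φ (norm (u x)) ∂μ :=
    integral_nonneg fun x => hΦy.nonneg _ (norm_nonneg _)
  have hΨ10 : 0 ≤ Ψ 1 := hΨy.nonneg 1 zero_le_one
  set M := fCoeff μ E u π with hM
  set h := hsNorm M with hh
  rcases eq_or_lt_of_le (hsNorm_nonneg M) with h0 | hpos
  · have hz : h = 0 := h0.symm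
    rw [Ff, ← hM, ← hh, hz, zero_div]
    positivity
  set s := h * Real.sqrt (k π) with hs
  have hspos : 0 < s := mul_pos hpos (sqrt_k_pos hsys π)
  set g₀ : X → ℂ := fun x => ∑ i, ∑ j, M i j * E π x j i with hg₀
  -- |g₀ x| ≤ s
  have claim2 : ∀ x, norm (g₀ x) ≤ s := by
    intro x
    set F : Fin (d π) × Fin (d π) → ℝ := fun ij => norm (M ij.1 ij.2) with hF
    set G : Fin (d π) × Fin (d π) → ℝ := fun ij => norm (E π x ij.2 ij.1) with hG
    have habs : norm (g₀ x) ≤ ∑ ij : Fin (d π) × Fin (d π), F ij * G ij := by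
      rw [Fintype.sum_prod_type]
      refine (norm_sum_le _ _).trans (Finset.sum_le_sum fun i _ => ?_)
      refine (norm_sum_le _ _).trans (Finset.sum_le_sum fun j _ => ?_)
      rw [norm_mul]
    have hF2 : ∑ ij : Fin (d π) × Fin (d π), F ij ^ 2 = h ^ 2 := by
      rw [hh, hsNorm_sq, Fintype.sum_prod_type]
    have hG2 : ∑ ij : Fin (d π) × Fin (d π), G ij ^ 2 = (k π : ℝ) := by
      rw [Fintype.sum_prod_type]
      rw [Finset.sum_comm]
      exact hsys.trace_id π x
    have hCS := Finset.sum_mul_sq_le_sq_mul_sq Finset.univ F G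
    rw [hF2, hG2] at hCS
    have hsum_nonneg : 0 ≤ ∑ ij : Fin (d π) × Fin (d π), F ij * G ij :=
      Finset.sum_nonneg fun ij _ => mul_nonneg (norm_nonneg _) (norm_nonneg _)
    have hs2 : s ^ 2 = h ^ 2 * (k π : ℝ) := by
      rw [hs, mul_pow, Real.sq_sqrt (by positivity)]
    nlinarith [habs, hCS, hsum_nonneg, hspos]
  -- ∫ u conj g₀ = h²
  have claim1 : ∫ x, u x * (starRingEnd ℂ) (g₀ x) ∂μ = ((h ^ 2 : ℝ) : ℂ) := by
    have hrw : (fun x => u x * (starRingEnd ℂ) (g₀ x)) =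
        fun x => ∑ i, ∑ j, (starRingEnd ℂ) (M i j) * (u x * (starRingEnd ℂ) (E π x j i)) := by
      funext x
      rw [hg₀, map_sum, Finset.mul_sum]
      refine Finset.sum_congr rfl fun i _ => ?_
      rw [map_sum, Finset.mul_sum]
      refine Finset.sum_congr rfl fun j _ => ?_
      rw [map_mul]
      ring
    rw [hrw]
    rw [integral_finset_sum _ (fun i _ => integrable_finset_sum _ (fun j _ =>
      (integrable_mul_conjE hsys hm hb π i j).const_mul _))]
    rw [Finset.sum_congr rfl (fun i (_ : i ∈ Finset.univ) => integral_finset_sum _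
      (fun j _ => (integrable_mul_conjE hsys hm hb π i j).const_mul _))]
    have hint_eq : ∀ i j : Fin (d π), (∫ x, (starRingEnd ℂ) (M i j) *
        (u x * (starRingEnd ℂ) (E π x j i)) ∂μ) = (starRingEnd ℂ) (M i j) * M i j := by
      intro i j
      rw [integral_const_mul, ← fCoeff_apply, ← hM]
    rw [Finset.sum_congr rfl fun i _ => Finset.sum_congr rfl fun j _ => hint_eq i j]
    have hterm : ∀ i j : Fin (d π), (starRingEnd ℂ) (M i j) * M i j =
        ((norm (M i j) ^ 2 : ℝ) : ℂ) := by
      intro i j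
      rw [mul_comm, Complex.mul_conj, ← Complex.sq_norm]
    rw [Finset.sum_congr rfl fun i _ => Finset.sum_congr rfl fun j _ => hterm i j]
    rw [hh, hsNorm_sq]
    norm_cast
  -- measurability of g₀
  have hg₀m : Measurable g₀ := by
    rw [hg₀]
    apply Finset.measurable_sum
    intro i _
    apply Finset.measurable_sum
    intro j _
    exact (hsys.measurable π j i).const_mul _
  have habs_eq : h ^ 2 = norm (∫ x, u x * (starRingEnd ℂ) (g₀ x) ∂μ) := by
    rw [claim1, Complex.norm_real, Real.norm_eq_abs, abs_of_nonneg (by positivity)]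
  have hstep1 : norm (∫ x, u x * (starRingEnd ℂ) (g₀ x) ∂μ) ≤
      ∫ x, norm (u x) * norm (g₀ x) ∂μ := by
    calc norm (∫ x, u x * (starRingEnd ℂ) (g₀ x) ∂μ)
        = ‖∫ x, u x * (starRingEnd ℂ) (g₀ x) ∂μ‖ := rfl
    _ ≤ ∫ x, ‖u x * (starRingEnd ℂ) (g₀ x)‖ ∂μ := norm_integral_le_integral_norm _
    _ = ∫ x, norm (u x) * norm (g₀ x) ∂μ := by
        congr 1
        funext x
        rw [norm_mul, Complex.norm_conj]
  have hptwise : ∀ x, norm (u x) * norm (g₀ x) ≤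
      s * (Φ (norm (u x)) + Ψ 1) := by
    intro x
    have hbs : norm (g₀ x) / s ≤ 1 := (div_le_one hspos).mpr (claim2 x)
    have h1 : norm (u x) * (norm (g₀ x) / s) ≤
        Φ (norm (u x)) + Ψ (norm (g₀ x) / s) :=
      pair_young hpair (norm_nonneg _) (div_nonneg (norm_nonneg _) hspos.le)
    have h2 : Ψ (norm (g₀ x) / s) ≤ Ψ 1 :=
      IsYoung.mono hΨy (div_nonneg (norm_nonneg _) hspos.le) hbs
    have h3 : norm (u x) * norm (g₀ x) =
        s * (norm (u x) * (norm (g₀ x) / s)) := by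
      field_simp
    rw [h3]
    apply mul_le_mul_of_nonneg_left _ hspos.le
    linarith
  have hIabs : Integrable (fun x => norm (u x) * norm (g₀ x)) μ := by
    apply integrable_bddR μ ((measurable_cabs hm).mul (measurable_cabs hg₀m)) (B * s)
    intro x
    rw [Pi.mul_apply, abs_of_nonneg (mul_nonneg (norm_nonneg _) (norm_nonneg _))]
    exact mul_le_mul (hb x) (claim2 x) (norm_nonneg _) hB0
  have hstep2 : ∫ x, norm (u x) * norm (g₀ x) ∂μ ≤
      s * ((∫ x, Φ (norm (u x)) ∂μ) + Ψ 1) := by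
    have hI2 : Integrable (fun x => s * (Φ (norm (u x)) + Ψ 1)) μ :=
      (hIint.add (integrable_const _)).const_mul s
    calc ∫ x, norm (u x) * norm (g₀ x) ∂μ
        ≤ ∫ x, s * (Φ (norm (u x)) + Ψ 1) ∂μ := integral_mono hIabs hI2 hptwise
    _ = s * ((∫ x, Φ (norm (u x)) ∂μ) + Ψ 1) := by
        rw [integral_const_mul, integral_add hIint (integrable_const _), integral_const]
        simp [measure_univ]
  have hfinal : h ^ 2 ≤ s * ((∫ x, Φ (norm (u x)) ∂μ) + Ψ 1) :=
    (habs_eq ▸ hstep1).trans hstep2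
  have hh_le : h ≤ Real.sqrt (k π) * ((∫ x, Φ (norm (u x)) ∂μ) + Ψ 1) := by
    have : h * h ≤ h * (Real.sqrt (k π) * ((∫ x, Φ (norm (u x)) ∂μ) + Ψ 1)) := by
      calc h * h = h ^ 2 := (sq h).symm
      _ ≤ s * ((∫ x, Φ (norm (u x)) ∂μ) + Ψ 1) := hfinal
      _ = h * (Real.sqrt (k π) * ((∫ x, Φ (norm (u x)) ∂μ) + Ψ 1)) := by
          rw [hs]; ring
    exact le_of_mul_le_mul_left this hpos
  rw [Ff, ← hM, ← hh, div_le_iff₀ (sqrt_k_pos hsys π)]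
  calc h ≤ Real.sqrt (k π) * ((∫ x, Φ (norm (u x)) ∂μ) + Ψ 1) := hh_le
  _ = ((∫ x, Φ (norm (u x)) ∂μ) + Ψ 1) * Real.sqrt (k π) := mul_comm _ _

end KeyAux2
namespace KeyAux2

open MeasureTheory KeyAux

variable {X : Type*} [MeasurableSpace X] {ι : Type*} {μ : Measure X} [IsProbabilityMeasure μ]
  {d k : ι → ℕ} {E : (π : ι) → X → Matrix (Fin (d π)) (Fin (d π)) ℂ}
  {Φ Ψ : ℝ → ℝ}

lemma pow_rpow_comm {a : ℝ} (ha : 0 ≤ a) (n : ℕ) (r : ℝ) : (a ^ n) ^ r = (a ^ r) ^ n := by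
  rw [← Real.rpow_natCast a n, ← Real.rpow_mul ha, mul_comm, Real.rpow_mul ha, Real.rpow_natCast]

lemma geom_finset_le {ρ : ℝ} (h0 : 0 ≤ ρ) (h1 : ρ < 1) (T : Finset ℕ) :
    ∑ j ∈ T, ρ ^ j ≤ (1 - ρ)⁻¹ := by
  calc ∑ j ∈ T, ρ ^ j ≤ ∑' j : ℕ, ρ ^ j :=
        Summable.sum_le_tsum T (fun j _ => pow_nonneg h0 j) (summable_geometric_of_lt_one h0 h1)
  _ = (1 - ρ)⁻¹ := tsum_geometric_of_lt_one h0 h1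

variable (hsys : RepSystem μ d k E)
include hsys

set_option maxHeartbeats 2000000 in
/-- The central estimate. -/
lemma central (hpair : IsComplementaryPair Φ Ψ) (hΦc : ContinuousOn Φ (Set.Ici 0))
    (hnorm : Φ 1 + Ψ 1 = 1) (hΦ₀ : YoungPrec Φ (fun t => t ^ 2 / 2))
    (p c₀ : ℝ) (hp : 1 ≤ p) (hc₀ : 0 < c₀)
    (hΨ' : ∀ t : ℝ, 0 ≤ t → deriv Ψ t ≤ c₀ * t ^ p) :
    ∃ Cstar : ℝ, 0 < Cstar ∧ ∀ (u : X → ℂ) (B : ℝ), Measurable u →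
      (∀ x, norm (u x) ≤ B) →
      (∫ x, Φ (norm (u x)) ∂μ) ≤ Φ 1 → ∀ S : Finset ι,
      ∑ π ∈ S, (k π : ℝ) * (d π : ℝ) * (Ff μ k E u π) ^ (p + 1) ≤ Cstar := by
  have hΦy := hpair.1
  have hΨy := hpair.2.1
  have hppos : 0 < p := lt_of_lt_of_le one_pos hp
  have hΦ1 : 0 ≤ Φ 1 := hΦy.nonneg 1 zero_le_one
  obtain ⟨a₀, b₀, cc, e₀, x₀, x₁, ha₀, hb₀, hcc, he₀, hx₀, hx₁, hup, hlow⟩ := hΦ₀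
  set α : ℝ := cc ^ 2 / (2 * e₀) with hα_def
  have hα : 0 < α := by positivity
  have hΦsmall : ∀ x : ℝ, 0 ≤ x → x ≤ x₁ → α * x ^ 2 ≤ Φ x := by
    intro x hx hxx
    have h2 : (cc * x) ^ 2 / 2 ≤ e₀ * Φ x := hlow x hx hxx
    rw [hα_def, div_mul_eq_mul_div, div_le_iff₀ (by positivity)]
    calc cc ^ 2 * x ^ 2 = 2 * ((cc * x) ^ 2 / 2) := by ring
    _ ≤ 2 * (e₀ * Φ x) := by linarith
    _ = Φ x * (2 * e₀) := by ring
  set c₁ : ℝ := c₀ * 2 ^ p with hc₁_def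
  have hc₁ : 0 < c₁ := by
    have : (0:ℝ) < (2:ℝ) ^ p := Real.rpow_pos_of_pos (by norm_num) p
    positivity
  have hpsi : ∀ y : ℝ, 0 ≤ y → Ψ y ≤ c₁ * y ^ (p + 1) := psi_poly hpair hp hc₀ hΨ'
  set q : ℝ := 1 + 1 / p with hq_def
  set β : ℝ := (p / (p + 1)) * (c₁ * (p + 1)) ^ (-(1/p)) with hβ_def
  have hβ : 0 < β := by
    have : (0:ℝ) < (c₁ * (p + 1)) ^ (-(1/p)) := Real.rpow_pos_of_pos (by positivity) _
    positivity
  have hΦq : ∀ x : ℝ, 0 ≤ x → β * x ^ q ≤ Φ x := by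
    intro x hx
    have h := phi_q_lower hpair hp hc₁ hpsi x hx
    calc β * x ^ q = p / (p + 1) * (c₁ * (p + 1)) ^ (-(1 / p)) * x ^ (1 + 1/p) := by
          rw [hβ_def, hq_def]
    _ ≤ Φ x := h
  have hΦtilde : Continuous fun s : ℝ => Φ (max s 0) :=
    ContinuousOn.comp_continuous hΦc (continuous_id.max continuous_const)
      (fun s => Set.mem_Ici.mpr (le_max_right _ _))
  have hΦint : ∀ (u : X → ℂ) (B : ℝ), Measurable u → (∀ x, norm (u x) ≤ B) →
      Integrable (fun x => Φ (norm (u x))) μ := by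
    intro u B hm hbd
    have heq : (fun x => Φ (norm (u x))) = fun x => Φ (max (norm (u x)) 0) :=
      funext fun x => by rw [max_eq_left (norm_nonneg _)]
    rw [heq]
    have hmeas2 : Measurable fun x => Φ (max (norm (u x)) 0) :=
      hΦtilde.measurable.comp (measurable_cabs hm)
    apply integrable_bddR μ hmeas2 (Φ B)
    intro x
    rw [max_eq_left (norm_nonneg _),
      abs_of_nonneg (hΦy.nonneg _ (norm_nonneg _))]
    exact IsYoung.mono hΦy (norm_nonneg _) (hbd x)
  rcases eq_or_lt_of_le hp with hp1 | hp1
  · -- case p = 1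
    refine ⟨Φ 1 / β + 1, by positivity, ?_⟩
    intro u B hm hbd hmod S
    have hq2 : q = 2 := by rw [hq_def, ← hp1]; norm_num
    have hmem2 : MemLp u 2 μ := by
      apply MemLp.of_bound hm.aestronglyMeasurable B
      filter_upwards with x
      exact hbd x
    have hpt : ∀ x : X, norm (u x) ^ 2 ≤ Φ (norm (u x)) / β := by
      intro x
      rw [le_div_iff₀ hβ]
      have h := hΦq (norm (u x)) (norm_nonneg _)
      rw [hq2, Real.rpow_two] at h
      linarith
    have hIu2 : Integrable (fun x => norm (u x) ^ 2) μ := by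
      apply integrable_bddR μ ((measurable_cabs hm).pow_const 2) (B ^ 2)
      intro x
      rw [abs_of_nonneg (sq_nonneg _)]
      exact pow_le_pow_left₀ (norm_nonneg _) (hbd x) 2
    have hchain : ∑ π ∈ S, (k π : ℝ) * (d π : ℝ) * (Ff μ k E u π) ^ (p + 1) ≤ Φ 1 / β := by
      calc ∑ π ∈ S, (k π : ℝ) * (d π : ℝ) * (Ff μ k E u π) ^ (p + 1)
          = ∑ π ∈ S, (k π : ℝ) * (d π : ℝ) * (Ff μ k E u π) ^ 2 := by
            refine Finset.sum_congr rfl fun π _ => ?_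
            rw [show p + 1 = (2:ℝ) by rw [← hp1]; norm_num, Real.rpow_two]
      _ ≤ ∫ x, norm (u x) ^ 2 ∂μ := parseval_partial hsys hmem2 S
      _ ≤ ∫ x, Φ (norm (u x)) / β ∂μ :=
            integral_mono hIu2 ((hΦint u B hm hbd).div_const β) hpt
      _ = (∫ x, Φ (norm (u x)) ∂μ) / β := integral_div β _
      _ ≤ Φ 1 / β := by gcongr
    linarith
  · -- case p > 1
    set D : ℝ := Φ 1 / β + 1 with hD_def
    have hD1 : 1 ≤ D := by
      have : 0 ≤ Φ 1 / β := by positivity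
      rw [hD_def]; linarith
    have hD0 : 0 < D := lt_of_lt_of_le one_pos hD1
    set ρ : ℝ := (1/2 : ℝ) ^ (p + 1) * 4 with hρ_def
    have hρ0 : 0 < ρ := by
      have : (0:ℝ) < (1/2 : ℝ) ^ (p + 1) := Real.rpow_pos_of_pos (by norm_num) _
      positivity
    have hρ1 : ρ < 1 := by
      have h1 : ((1:ℝ)/2) ^ (p + 1) < (1/2 : ℝ) ^ (2:ℝ) := by
        apply Real.rpow_lt_rpow_of_exponent_gt (by norm_num) (by norm_num)
        linarith
      have h2 : ((1:ℝ)/2) ^ (2:ℝ) = 1/4 := by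
        rw [Real.rpow_two]; norm_num
      rw [hρ_def]
      nlinarith [h1, h2]
    have hρeq : ρ = (2:ℝ) ^ ((1:ℝ) - p) := by
      have h1 : ((1:ℝ)/2) ^ (p+1) = ((2:ℝ) ^ (p+1))⁻¹ := by
        rw [show ((1:ℝ)/2) = (2:ℝ)⁻¹ by norm_num, Real.inv_rpow (by norm_num)]
      have h2 : (4:ℝ) = (2:ℝ) ^ (2:ℝ) := by
        rw [Real.rpow_two]; norm_num
      rw [hρ_def, h1, h2, ← Real.rpow_neg (by norm_num), ← Real.rpow_add (by norm_num)]
      ring_nf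
    set κ : ℝ := (1 - ρ)⁻¹ with hκ_def
    have hκ0 : 0 < κ := by
      rw [hκ_def]
      exact inv_pos.mpr (by linarith)
    set K : ℝ := max (1/α) ((4*D) ^ (p - 1) / β) with hK_def
    have hK0 : 0 < K := lt_of_lt_of_le (by positivity) (le_max_left _ _)
    refine ⟨16 * κ * K * Φ 1 + 1, by positivity, ?_⟩
    intro u B hm hbd hmod S
    have hB0 : 0 ≤ B := by
      have : Nonempty X := nonemptyX μ
      exact (norm_nonneg _).trans (hbd Classical.ofNonempty)
    have hIint : Integrable (fun x => Φ (norm (u x))) μ := hΦint u B hm hbd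
    set t : ι → ℝ := fun π => Ff μ k E u π with ht_def
    have ht0 : ∀ π, 0 ≤ t π := fun π => Ff_nonneg u π
    have ht1 : ∀ π, t π ≤ 1 := by
      intro π
      calc t π ≤ (∫ x, Φ (norm (u x)) ∂μ) + Ψ 1 := Ff_le_mod hsys hpair hm hbd hIint π
      _ ≤ Φ 1 + Ψ 1 := by linarith
      _ = 1 := hnorm
    -- cutoff data
    set H : ℕ → ℝ := fun j => ((2:ℝ) ^ (j + 2) * D) ^ p with hH_def
    have hHpos : ∀ j, 0 < H j := fun j => Real.rpow_pos_of_pos (by positivity) p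
    set v : ℕ → X → ℂ := fun j x => if norm (u x) ≤ H j then u x else 0 with hv_def
    set w : ℕ → X → ℂ := fun j x => if norm (u x) ≤ H j then 0 else u x with hw_def
    have hvmeas : ∀ j, Measurable (v j) := fun j =>
      Measurable.ite (measurableSet_le (measurable_cabs hm) measurable_const) hm measurable_const
    have hwmeas : ∀ j, Measurable (w j) := fun j =>
      Measurable.ite (measurableSet_le (measurable_cabs hm) measurable_const) measurable_const hm
    have hvbd : ∀ j x, norm (v j x) ≤ B := by
      intro j x
      rw [hv_def]
      by_cases hx : norm (u x) ≤ H j <;> simp [hx, hbd x, hB0]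
    have hwbd : ∀ j x, norm (w j x) ≤ B := by
      intro j x
      rw [hw_def]
      by_cases hx : norm (u x) ≤ H j <;> simp [hx, hbd x, hB0]
    have hvw : ∀ j x, v j x + w j x = u x := by
      intro j x
      rw [hv_def, hw_def]
      by_cases hx : norm (u x) ≤ H j <;> simp [hx]
    have hsplit : ∀ (j : ℕ) (π : ι), t π ≤ Ff μ k E (v j) π + Ff μ k E (w j) π := by
      intro j π
      have he1 : u = fun x => v j x + w j x := funext fun x => (hvw j x).symm
      have he2 : fCoeff μ E u π = fCoeff μ E (v j) π + fCoeff μ E (w j) π := by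
        conv_lhs => rw [he1]
        exact fCoeff_add hsys (hvmeas j) (hwmeas j) (hvbd j) (hwbd j) π
      show Ff μ k E u π ≤ _
      rw [Ff, he2, Ff, Ff, ← add_div]
      gcongr
      exact hsNorm_add_le _ _
    -- L¹ bound for w j
    have hwL1 : ∀ j : ℕ, (∫ x, norm (w j x) ∂μ) ≤ (1/2:ℝ) ^ (j + 2) := by
      intro j
      have hpt : ∀ x, norm (w j x) ≤
          Φ (norm (u x)) / (β * 2 ^ (j+2) * D) := by
        intro x
        rw [hw_def]
        by_cases hx : norm (u x) ≤ H j
        · simp only [if_pos hx, norm_zero]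
          apply div_nonneg (hΦy.nonneg _ (norm_nonneg _)) (by positivity)
        · simp only [if_neg hx]
          push_neg at hx
          set r := norm (u x) with hr_def
          have hr0 : 0 < r := (hHpos j).trans hx
          have h1 : β * r ^ q ≤ Φ r := hΦq r hr0.le
          have h2 : (H j) ^ (1/p : ℝ) ≤ r ^ (1/p : ℝ) :=
            Real.rpow_le_rpow (hHpos j).le hx.le (by positivity)
          have h3 : (H j) ^ (1/p:ℝ) = 2 ^ (j+2) * D := by
            rw [hH_def, ← Real.rpow_mul (by positivity), mul_one_div_cancel hppos.ne',
              Real.rpow_one]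
          have h4 : r ^ q = r * r ^ (1/p : ℝ) := by
            rw [hq_def, Real.rpow_add hr0, Real.rpow_one]
          have h5 : r * ((2:ℝ)^(j+2) * D) ≤ r ^ q := by
            rw [h4]
            apply mul_le_mul_of_nonneg_left _ hr0.le
            rw [← h3]; exact h2
          have h6 : β * (r * ((2:ℝ)^(j+2)*D)) ≤ Φ r :=
            le_trans (mul_le_mul_of_nonneg_left h5 hβ.le) h1
          rw [le_div_iff₀ (by positivity)]
          calc r * (β * 2^(j+2) * D) = β * (r * ((2:ℝ)^(j+2)*D)) := by ring
          _ ≤ Φ r := h6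
      have hIw : Integrable (fun x => norm (w j x)) μ := by
        apply integrable_bddR μ (measurable_cabs (hwmeas j)) B
        intro x
        rw [abs_of_nonneg (norm_nonneg _)]
        exact hwbd j x
      have hβD : (∫ x, Φ (norm (u x)) ∂μ) ≤ β * D := by
        have hDβ : β * D = Φ 1 + β := by
          rw [hD_def]; field_simp
        rw [hDβ]
        linarith
      calc ∫ x, norm (w j x) ∂μ
          ≤ ∫ x, Φ (norm (u x)) / (β * 2 ^ (j+2) * D) ∂μ :=
            integral_mono hIw (hIint.div_const _) hpt
      _ = (∫ x, Φ (norm (u x)) ∂μ) / (β * 2 ^ (j+2) * D) := integral_div _ _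
      _ ≤ (1/2:ℝ) ^ (j+2) := by
            rw [div_le_iff₀ (by positivity)]
            have hone : ((1:ℝ)/2)^(j+2) * (2:ℝ)^(j+2) = 1 := by
              rw [← mul_pow]; norm_num
            calc (∫ x, Φ (norm (u x)) ∂μ) ≤ β * D := hβD
            _ = (1/2:ℝ)^(j+2) * (β * 2^(j+2) * D) := by
                calc β * D = (((1:ℝ)/2)^(j+2) * (2:ℝ)^(j+2)) * (β * D) := by
                      rw [hone, one_mul]
                _ = (1/2:ℝ)^(j+2) * (β * 2^(j+2) * D) := by ring
    have hFw : ∀ (j : ℕ) (π : ι), Ff μ k E (w j) π ≤ (1/2:ℝ)^(j+2) := by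
      intro j π
      calc Ff μ k E (w j) π = hsNorm (fCoeff μ E (w j) π) / Real.sqrt (k π) := rfl
      _ ≤ (Real.sqrt (k π) * ∫ x, norm (w j x) ∂μ) / Real.sqrt (k π) := by
          gcongr
          exact hs_le_L1 hsys (hwmeas j) (hwbd j) π
      _ = ∫ x, norm (w j x) ∂μ := by
          rw [mul_comm, mul_div_assoc, div_self (sqrt_k_pos hsys π).ne', mul_one]
      _ ≤ (1/2:ℝ)^(j+2) := hwL1 j
    have hmem2v : ∀ j, MemLp (v j) 2 μ := by
      intro j
      apply MemLp.of_bound (hvmeas j).aestronglyMeasurable B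
      filter_upwards with x
      exact hvbd j x
    have hIv2 : ∀ j, Integrable (fun x => norm (v j x) ^ 2) μ := by
      intro j
      apply integrable_bddR μ ((measurable_cabs (hvmeas j)).pow_const 2) (B ^ 2)
      intro x
      rw [abs_of_nonneg (sq_nonneg _)]
      exact pow_le_pow_left₀ (norm_nonneg _) (hvbd j x) 2
    -- dyadic decomposition of the frequency set
    have hex : ∀ π, 0 < t π → ∃ n : ℕ, (1/2:ℝ) ^ (n+1) < t π := by
      intro π htp
      obtain ⟨n, hn⟩ := exists_pow_lt_of_lt_one htp (by norm_num : (1:ℝ)/2 < 1)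
      exact ⟨n, lt_of_le_of_lt
        (pow_le_pow_of_le_one (by norm_num) (by norm_num) (Nat.le_succ n)) hn⟩
    classical
    set jm : ι → ℕ := fun π => if h : 0 < t π then Nat.find (hex π h) else 0 with hjm_def
    have hspec : ∀ π, 0 < t π → (1/2:ℝ) ^ (jm π + 1) < t π := by
      intro π htp
      rw [hjm_def]
      simp only [dif_pos htp]
      exact Nat.find_spec (hex π htp)
    have hmin : ∀ π, t π ≤ (1/2:ℝ) ^ (jm π) := by
      intro π
      by_cases htp : 0 < t π
      · rw [hjm_def]
        simp only [dif_pos htp]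
        rcases Nat.eq_zero_or_pos (Nat.find (hex π htp)) with h0 | hpos'
        · rw [h0, pow_zero]; exact ht1 π
        · have hnm := Nat.find_min (hex π htp) (Nat.sub_lt hpos' one_pos)
          push_neg at hnm
          have hfind : Nat.find (hex π htp) - 1 + 1 = Nat.find (hex π htp) := by omega
          rwa [hfind] at hnm
      · have h0 : t π = 0 := le_antisymm (not_lt.mp htp) (ht0 π)
        rw [h0]
        positivity
    set S' := S.filter (fun π => 0 < t π) with hS'_def
    set J := S'.sup jm with hJ_def
    have hcount : ∀ j : ℕ, (∑ π ∈ S'.filter (fun π => jm π = j), (k π : ℝ) * (d π : ℝ)) ≤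
        16 * 4 ^ j * ∫ x, norm (v j x) ^ 2 ∂μ := by
      intro j
      have hlb : ∀ π ∈ S'.filter (fun π => jm π = j),
          (1/2:ℝ)^(j+2) < Ff μ k E (v j) π := by
        intro π hπ
        rw [Finset.mem_filter] at hπ
        obtain ⟨hπS', hπj⟩ := hπ
        rw [hS'_def, Finset.mem_filter] at hπS'
        have htp : 0 < t π := hπS'.2
        have h1 : (1/2:ℝ)^(j+1) < t π := by rw [← hπj]; exact hspec π htp
        have h2 := hsplit j π
        have h3 := hFw j π
        have h4 : (1/2:ℝ)^(j+1) = 2 * (1/2:ℝ)^(j+2) := by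
          rw [pow_succ]
          ring
        linarith
      have hstep : ∀ π ∈ S'.filter (fun π => jm π = j), (k π:ℝ)*(d π:ℝ) ≤
          4^(j+2) * ((k π:ℝ)*(d π:ℝ)*(Ff μ k E (v j) π)^2) := by
        intro π hπ
        have h5 := hlb π hπ
        have h6 : ((1/2:ℝ)^(j+2))^2 ≤ (Ff μ k E (v j) π)^2 :=
          pow_le_pow_left₀ (pow_nonneg (by norm_num) (j+2)) h5.le 2
        have h7 : ((1/2:ℝ)^(j+2))^2 * 4^(j+2) = 1 := by
          calc ((1/2:ℝ)^(j+2))^2 * 4^(j+2) = (((1:ℝ)/2)^2)^(j+2) * 4^(j+2) := by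
                rw [← pow_mul, ← pow_mul, Nat.mul_comm]
          _ = ((((1:ℝ)/2)^2) * 4)^(j+2) := by rw [mul_pow]
          _ = 1 := by norm_num
        have hkd : (0:ℝ) ≤ (k π:ℝ)*(d π:ℝ) := by positivity
        calc (k π:ℝ)*(d π:ℝ)
            = (k π:ℝ)*(d π:ℝ) * (((1/2:ℝ)^(j+2))^2 * 4^(j+2)) := by rw [h7, mul_one]
        _ = 4^(j+2) * ((k π:ℝ)*(d π:ℝ) * ((1/2:ℝ)^(j+2))^2) := by ring
        _ ≤ 4^(j+2) * ((k π:ℝ)*(d π:ℝ)*(Ff μ k E (v j) π)^2) := by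
              apply mul_le_mul_of_nonneg_left _ (by positivity)
              exact mul_le_mul_of_nonneg_left h6 hkd
      calc ∑ π ∈ S'.filter (fun π => jm π = j), (k π : ℝ) * (d π : ℝ)
          ≤ ∑ π ∈ S'.filter (fun π => jm π = j),
            4^(j+2) * ((k π:ℝ)*(d π:ℝ)*(Ff μ k E (v j) π)^2) := Finset.sum_le_sum hstep
      _ = 4^(j+2) * ∑ π ∈ S'.filter (fun π => jm π = j),
            (k π:ℝ)*(d π:ℝ)*(Ff μ k E (v j) π)^2 := by rw [Finset.mul_sum]
      _ ≤ 4^(j+2) * ∫ x, norm (v j x) ^ 2 ∂μ :=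
            mul_le_mul_of_nonneg_left (parseval_partial hsys (hmem2v j) _) (by positivity)
      _ = 16 * 4^j * ∫ x, norm (v j x) ^ 2 ∂μ := by
            rw [pow_add]
            ring
    -- pointwise bound
    have hpt_main : ∀ x, (∑ j ∈ Finset.range (J+1), ρ^j * norm (v j x)^2) ≤
        κ * K * Φ (norm (u x)) := by
      intro x
      set r : ℝ := norm (u x) with hr_def
      have hr0 : 0 ≤ r := norm_nonneg _
      have hΦr : 0 ≤ Φ r := hΦy.nonneg r hr0
      have hterm : ∀ j, norm (v j x)^2 = if r ≤ H j then r^2 else 0 := by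
        intro j
        rw [hv_def]
        by_cases hx : r ≤ H j <;> simp [hx, ← hr_def]
      have hstep1 : (∑ j ∈ Finset.range (J+1), ρ^j * norm (v j x)^2) =
          ∑ j ∈ (Finset.range (J+1)).filter (fun j => r ≤ H j), ρ^j * r^2 := by
        rw [Finset.sum_filter]
        refine Finset.sum_congr rfl fun j _ => ?_
        rw [hterm j]
        by_cases hx : r ≤ H j <;> simp [hx]
      rw [hstep1]
      set T := (Finset.range (J+1)).filter (fun j => r ≤ H j) with hT_def
      by_cases hr1 : r ≤ x₁
      · calc ∑ j ∈ T, ρ^j * r^2 = (∑ j ∈ T, ρ^j) * r^2 := by rw [Finset.sum_mul]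
        _ ≤ κ * r^2 := mul_le_mul_of_nonneg_right (geom_finset_le hρ0.le hρ1 T) (sq_nonneg r)
        _ ≤ κ * (Φ r / α) := by
            apply mul_le_mul_of_nonneg_left _ hκ0.le
            rw [le_div_iff₀ hα]
            have h := hΦsmall r hr0 hr1
            linarith
        _ = κ * (1/α) * Φ r := by ring
        _ ≤ κ * K * Φ r := by
            apply mul_le_mul_of_nonneg_right _ hΦr
            exact mul_le_mul_of_nonneg_left (le_max_left _ _) hκ0.le
      · push_neg at hr1
        have hrpos : 0 < r := hx₁.trans hr1
        rcases Finset.eq_empty_or_nonempty T with hT | hTne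
        · rw [hT, Finset.sum_empty]
          positivity
        · set j₁ := T.min' hTne with hj₁_def
          have hj₁T : j₁ ∈ T := T.min'_mem hTne
          have hrH : r ≤ H j₁ := (Finset.mem_filter.mp hj₁T).2
          have hsub : T ⊆ Finset.Ico j₁ (J+1) := by
            intro j hj
            rw [Finset.mem_Ico]
            exact ⟨T.min'_le j hj, Finset.mem_range.mp (Finset.mem_filter.mp hj).1⟩
          have hsumT : (∑ j ∈ T, ρ^j) ≤ ρ^j₁ * κ := by
            calc ∑ j ∈ T, ρ^j ≤ ∑ j ∈ Finset.Ico j₁ (J+1), ρ^j :=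
                  Finset.sum_le_sum_of_subset_of_nonneg hsub (fun j _ _ => pow_nonneg hρ0.le j)
            _ = ∑ i ∈ Finset.range (J+1-j₁), ρ^(j₁+i) := by rw [Finset.sum_Ico_eq_sum_range]
            _ = ρ^j₁ * ∑ i ∈ Finset.range (J+1-j₁), ρ^i := by
                  rw [Finset.mul_sum]
                  exact Finset.sum_congr rfl fun i _ => by rw [pow_add]
            _ ≤ ρ^j₁ * κ :=
                  mul_le_mul_of_nonneg_left (geom_finset_le hρ0.le hρ1 _) (pow_nonneg hρ0.le _)
          have hkey : ρ^j₁ * r^2 ≤ (4*D)^(p-1) * r^q := by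
            set s2 : ℝ := (2:ℝ)^j₁ with hs2_def
            have hs2pos : 0 < s2 := by positivity
            have hcollapse : (H j₁) ^ (1/p:ℝ) = (2:ℝ)^(j₁+2) * D := by
              rw [hH_def, ← Real.rpow_mul (by positivity), mul_one_div_cancel hppos.ne',
                Real.rpow_one]
            have h_s2 : r ^ (1/p:ℝ) ≤ 4*D*s2 := by
              calc r ^ (1/p:ℝ) ≤ (H j₁) ^ (1/p:ℝ) := Real.rpow_le_rpow hr0 hrH (by positivity)
              _ = (2:ℝ)^(j₁+2) * D := hcollapse
              _ = 4*D*s2 := by rw [hs2_def, pow_add]; ring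
            have hρj : ρ^j₁ = s2 ^ ((1:ℝ)-p) := by
              rw [hρeq, hs2_def, ← pow_rpow_comm (by norm_num : (0:ℝ) ≤ 2) j₁ ((1:ℝ)-p)]
            have hA : (0:ℝ) < (r ^ (1/p:ℝ) / (4*D)) ^ (p-1) := by
              apply Real.rpow_pos_of_pos
              exact div_pos (Real.rpow_pos_of_pos hrpos _) (by positivity)
            have hmono2 : (r ^ (1/p:ℝ) / (4*D)) ^ (p-1) ≤ s2 ^ (p-1) := by
              apply Real.rpow_le_rpow (by positivity) _ (by linarith)
              rw [div_le_iff₀ (by positivity)]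
              calc r^(1/p:ℝ) ≤ 4*D*s2 := h_s2
              _ = s2 * (4*D) := by ring
            have hinv : ρ^j₁ ≤ ((r ^ (1/p:ℝ) / (4*D)) ^ (p-1))⁻¹ := by
              rw [hρj, show (1:ℝ) - p = -(p-1) by ring, Real.rpow_neg hs2pos.le]
              exact inv_anti₀ hA hmono2
            have e1 : (0:ℝ) < 4*D := by positivity
            have hAval : ((r ^ (1/p:ℝ) / (4*D)) ^ (p-1))⁻¹ =
                (4*D)^(p-1) * r ^ (-((1/p)*(p-1))) := by
              have h9 : (r ^ (1/p:ℝ) / (4*D)) ^ (p-1) = r ^ ((1/p)*(p-1)) / (4*D)^(p-1) := by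
                rw [Real.div_rpow (Real.rpow_nonneg hr0 _) e1.le, ← Real.rpow_mul hr0]
              rw [h9, inv_div, div_eq_mul_inv, ← Real.rpow_neg hr0]
            calc ρ^j₁ * r^2 ≤ ((r ^ (1/p:ℝ) / (4*D)) ^ (p-1))⁻¹ * r^2 :=
                  mul_le_mul_of_nonneg_right hinv (sq_nonneg r)
            _ = (4*D)^(p-1) * (r ^ (-((1/p)*(p-1))) * r^(2:ℝ)) := by
                  rw [hAval, Real.rpow_two]
                  ring
            _ = (4*D)^(p-1) * r ^ q := by
                  rw [← Real.rpow_add hrpos]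
                  congr 1
                  rw [hq_def]
                  field_simp
                  ring
          have hrq : r^q ≤ Φ r / β := by
            rw [le_div_iff₀ hβ]
            have h := hΦq r hr0
            linarith
          calc ∑ j ∈ T, ρ^j * r^2 = (∑ j ∈ T, ρ^j) * r^2 := by rw [Finset.sum_mul]
          _ ≤ (ρ^j₁ * κ) * r^2 := mul_le_mul_of_nonneg_right hsumT (sq_nonneg r)
          _ = κ * (ρ^j₁ * r^2) := by ring
          _ ≤ κ * ((4*D)^(p-1) * r^q) := mul_le_mul_of_nonneg_left hkey hκ0.le
          _ ≤ κ * ((4*D)^(p-1) * (Φ r / β)) := by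
                apply mul_le_mul_of_nonneg_left _ hκ0.le
                apply mul_le_mul_of_nonneg_left hrq (by positivity)
          _ = κ * ((4*D)^(p-1)/β) * Φ r := by ring
          _ ≤ κ * K * Φ r := by
                apply mul_le_mul_of_nonneg_right _ hΦr
                exact mul_le_mul_of_nonneg_left (le_max_right _ _) hκ0.le
    -- final assembly
    have hzero : (∑ π ∈ S.filter (fun π => ¬ 0 < t π),
        (k π:ℝ)*(d π:ℝ)*(t π)^(p+1)) = 0 := by
      refine Finset.sum_eq_zero fun π hπ => ?_
      rw [Finset.mem_filter] at hπ
      have h0 : t π = 0 := le_antisymm (not_lt.mp hπ.2) (ht0 π)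
      rw [h0, Real.zero_rpow (by positivity), mul_zero]
    have hmap : ∀ π ∈ S', jm π ∈ Finset.range (J+1) := fun π hπ =>
      Finset.mem_range.mpr (Nat.lt_succ_of_le (Finset.le_sup hπ))
    calc ∑ π ∈ S, (k π : ℝ) * (d π : ℝ) * (Ff μ k E u π) ^ (p + 1)
        = ∑ π ∈ S', (k π:ℝ)*(d π:ℝ)*(t π)^(p+1) := by
          rw [hS'_def]
          rw [← Finset.sum_filter_add_sum_filter_not S (fun π => 0 < t π)
            (fun π => (k π:ℝ)*(d π:ℝ)*(t π)^(p+1)), hzero, add_zero]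
    _ ≤ ∑ π ∈ S', (k π:ℝ)*(d π:ℝ)*((1/2:ℝ)^(jm π))^(p+1) := by
          refine Finset.sum_le_sum fun π hπ => ?_
          apply mul_le_mul_of_nonneg_left
            (Real.rpow_le_rpow (ht0 π) (hmin π) (by positivity)) (by positivity)
    _ = ∑ j ∈ Finset.range (J+1), ∑ π ∈ S'.filter (fun π => jm π = j),
          (k π:ℝ)*(d π:ℝ)*((1/2:ℝ)^(jm π))^(p+1) :=
          (Finset.sum_fiberwise_of_maps_to hmap _).symm
    _ = ∑ j ∈ Finset.range (J+1), ((1/2:ℝ)^j)^(p+1) *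
          ∑ π ∈ S'.filter (fun π => jm π = j), (k π:ℝ)*(d π:ℝ) := by
          refine Finset.sum_congr rfl fun j _ => ?_
          rw [Finset.mul_sum]
          refine Finset.sum_congr rfl fun π hπ => ?_
          rw [(Finset.mem_filter.mp hπ).2]
          ring
    _ ≤ ∑ j ∈ Finset.range (J+1), ((1/2:ℝ)^j)^(p+1) *
          (16 * 4^j * ∫ x, norm (v j x)^2 ∂μ) := by
          refine Finset.sum_le_sum fun j _ => ?_
          exact mul_le_mul_of_nonneg_left (hcount j) (by positivity)
    _ = 16 * ∑ j ∈ Finset.range (J+1), ρ^j * ∫ x, norm (v j x)^2 ∂μ := by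
          rw [Finset.mul_sum]
          refine Finset.sum_congr rfl fun j _ => ?_
          rw [pow_rpow_comm (by norm_num : (0:ℝ) ≤ 1/2) j (p+1), hρ_def, mul_pow]
          ring
    _ = 16 * ∫ x, (∑ j ∈ Finset.range (J+1), ρ^j * norm (v j x)^2) ∂μ := by
          congr 1
          rw [integral_finset_sum _ (fun j _ => (hIv2 j).const_mul _)]
          refine Finset.sum_congr rfl fun j _ => ?_
          rw [integral_const_mul]
    _ ≤ 16 * ∫ x, κ * K * Φ (norm (u x)) ∂μ := by
          apply mul_le_mul_of_nonneg_left _ (by norm_num)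
          exact integral_mono (integrable_finset_sum _ (fun j _ => (hIv2 j).const_mul _))
            (hIint.const_mul _) hpt_main
    _ = 16 * (κ * K * ∫ x, Φ (norm (u x)) ∂μ) := by rw [integral_const_mul]
    _ ≤ 16 * (κ * K * Φ 1) := by
          apply mul_le_mul_of_nonneg_left _ (by norm_num)
          exact mul_le_mul_of_nonneg_left hmod (by positivity)
    _ ≤ 16 * κ * K * Φ 1 + 1 := by
          nlinarith [hκ0, hK0, hΦ1]

end KeyAux2

namespace KeyAux2

open MeasureTheory KeyAux

variable {X : Type*} [MeasurableSpace X] {ι : Type*} {μ : Measure X} [IsProbabilityMeasure μ]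
  {d k : ι → ℕ} {E : (π : ι) → X → Matrix (Fin (d π)) (Fin (d π)) ℂ}
  {Φ Ψ : ℝ → ℝ}

lemma integrable_phiabs (hΦy : IsYoungFunction Φ) (hΦc : ContinuousOn Φ (Set.Ici 0))
    {u : X → ℂ} (hm : Measurable u) {B : ℝ} (hbd : ∀ x, norm (u x) ≤ B) :
    Integrable (fun x => Φ (norm (u x))) μ := by
  have hΦtilde : Continuous fun s : ℝ => Φ (max s 0) :=
    ContinuousOn.comp_continuous hΦc (continuous_id.max continuous_const)
      (fun s => Set.mem_Ici.mpr (le_max_right _ _))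
  have heq : (fun x => Φ (norm (u x))) = fun x => Φ (max (norm (u x)) 0) :=
    funext fun x => by rw [max_eq_left (norm_nonneg _)]
  rw [heq]
  have hmeas2 : Measurable fun x => Φ (max (norm (u x)) 0) :=
    hΦtilde.measurable.comp (measurable_cabs hm)
  apply integrable_bddR μ hmeas2 (Φ B)
  intro x
  rw [max_eq_left (norm_nonneg _),
    abs_of_nonneg (hΦy.nonneg _ (norm_nonneg _))]
  exact IsYoung.mono hΦy (norm_nonneg _) (hbd x)

end KeyAux2


set_option maxHeartbeats 2000000 in
/-- **Key Lemma** (Lemma 3.1): Let `G/K` be a compact homogeneous manifold with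
normalized measure `μ` and `(Φ, Ψ)` a normalized complementary pair of continuous Young
functions with (i) `Φ ≺ Φ₀` where `Φ₀(t) = t²/2`, and (ii) `Ψ′(t) ≤ c₀ t^p` for all
`t ≥ 0` for some `p ≥ 1`, `c₀ > 0`. Then there is `r̄₀ > 0`, independent of `Λ`, such that
for every finite `Λ ⊂ Ĝ₀` and every trigonometric polynomial
`f_Λ = ∑_{π∈Λ} d_π ∑_{i,j} c^π_{ij} π_{ij}` one has `N_Ψ(F_{f_Λ}) ≤ r̄₀ N_Φ(f_Λ)`. -/
theorem key_lemma
    {X : Type*} [MeasurableSpace X] {ι : Type*}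
    (μ : Measure X) [IsProbabilityMeasure μ]
    (d k : ι → ℕ) (E : (π : ι) → X → Matrix (Fin (d π)) (Fin (d π)) ℂ)
    (hsys : RepSystem μ d k E)
    (Φ Ψ : ℝ → ℝ) (hpair : IsComplementaryPair Φ Ψ)
    (hΦc : ContinuousOn Φ (Set.Ici 0)) (hΨc : ContinuousOn Ψ (Set.Ici 0))
    (hnorm : Φ 1 + Ψ 1 = 1)
    (hΦ₀ : YoungPrec Φ (fun t => t ^ 2 / 2))
    (p c₀ : ℝ) (hp : 1 ≤ p) (hc₀ : 0 < c₀)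
    (hΨ' : ∀ t : ℝ, 0 ≤ t → deriv Ψ t ≤ c₀ * t ^ p) :
    ∃ r₀ : ℝ, 0 < r₀ ∧
      ∀ (Λ : Finset ι) (c : (π : ι) → Matrix (Fin (d π)) (Fin (d π)) ℂ),
        gaugeNorm d k Ψ (Ff μ k E (trigPoly E Λ c)) ≤ r₀ * luxNorm μ Φ (trigPoly E Λ c) := by
  classical
  obtain ⟨Cstar, hC0, hcentral⟩ := KeyAux2.central hsys hpair hΦc hnorm hΦ₀ p c₀ hp hc₀ hΨ'
  have hΦy := hpair.1
  have hΨy := hpair.2.1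
  have hΨ10 : 0 ≤ Ψ 1 := hΨy.nonneg 1 zero_le_one
  have hΦ10 : 0 ≤ Φ 1 := hΦy.nonneg 1 zero_le_one
  have hp1 : (0:ℝ) < p + 1 := by linarith
  set c₁ : ℝ := c₀ * 2 ^ p with hc₁_def
  have hc₁ : 0 < c₁ := by
    have : (0:ℝ) < (2:ℝ) ^ p := Real.rpow_pos_of_pos (by norm_num) p
    positivity
  have hpsi : ∀ y : ℝ, 0 ≤ y → Ψ y ≤ c₁ * y ^ (p + 1) :=
    KeyAux.psi_poly hpair hp hc₀ hΨ'
  set X0 : ℝ := (c₁ * Cstar / Ψ 1) ^ (1/(p+1)) with hX0_def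
  set r₀ : ℝ := max 1 X0 with hr₀_def
  have hr₀1 : 1 ≤ r₀ := le_max_left _ _
  have hr₀0 : 0 < r₀ := lt_of_lt_of_le one_pos hr₀1
  refine ⟨r₀, hr₀0, ?_⟩
  intro Λ c
  set f : X → ℂ := trigPoly E Λ c with hf_def
  set B : ℝ := ∑ π ∈ Λ, (d π : ℝ) * ∑ i, ∑ j, norm (c π i j) * Real.sqrt (k π) with hB_def
  have hfm : Measurable f := KeyAux2.trigPoly_measurable hsys Λ c
  have hfb : ∀ x, norm (f x) ≤ B := KeyAux2.trigPoly_bound hsys Λ c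
  have hB0 : 0 ≤ B := by
    rw [hB_def]
    apply Finset.sum_nonneg
    intro π _
    apply mul_nonneg (Nat.cast_nonneg _)
    apply Finset.sum_nonneg
    intro i _
    apply Finset.sum_nonneg
    intro j _
    exact mul_nonneg (norm_nonneg _) (Real.sqrt_nonneg _)
  -- the Luxemburg set is nonempty
  have hTne : ∃ lam : ℝ, 0 < lam ∧
      ∫⁻ x, ENNReal.ofReal (Φ (|norm (f x)| / lam)) ∂μ ≤ ENNReal.ofReal (Φ 1) := by
    refine ⟨B + 1, by positivity, ?_⟩
    have hpt : ∀ x, Φ (|norm (f x)| / (B + 1)) ≤ Φ 1 := by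
      intro x
      apply KeyAux.IsYoung.mono hΦy (by positivity)
      rw [abs_of_nonneg (norm_nonneg _), div_le_one (by positivity)]
      calc norm (f x) ≤ B := hfb x
      _ ≤ B + 1 := by linarith
    calc ∫⁻ x, ENNReal.ofReal (Φ (|norm (f x)| / (B + 1))) ∂μ
        ≤ ∫⁻ _x, ENNReal.ofReal (Φ 1) ∂μ :=
          lintegral_mono fun x => ENNReal.ofReal_le_ofReal (hpt x)
    _ = ENNReal.ofReal (Φ 1) := by rw [lintegral_const, measure_univ, mul_one]
  -- main claim : for every admissible lam, r₀ * lam is gauge-admissible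
  have hmain : ∀ lam : ℝ, 0 < lam →
      (∫⁻ x, ENNReal.ofReal (Φ (|norm (f x)| / lam)) ∂μ ≤ ENNReal.ofReal (Φ 1)) →
      gaugeNorm d k Ψ (Ff μ k E f) ≤ r₀ * lam := by
    intro lam hlam0 hlammod
    set u : X → ℂ := fun x => ((lam⁻¹ : ℝ) : ℂ) * f x with hu_def
    have hum : Measurable u := hfm.const_mul _
    have huabs : ∀ x, norm (u x) = norm (f x) / lam := by
      intro x
      rw [hu_def]
      simp only [norm_mul, Complex.norm_real, Real.norm_eq_abs, abs_of_pos (inv_pos.mpr hlam0)]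
      rw [inv_mul_eq_div]
    have hub : ∀ x, norm (u x) ≤ B / lam := by
      intro x
      rw [huabs x]
      exact div_le_div_of_nonneg_right (hfb x) hlam0.le
    have hIint : Integrable (fun x => Φ (norm (u x))) μ :=
      KeyAux2.integrable_phiabs hΦy hΦc hum hub
    have hmodu : (∫ x, Φ (norm (u x)) ∂μ) ≤ Φ 1 := by
      have hnn : 0 ≤ᵐ[μ] fun x => Φ (norm (u x)) :=
        Filter.Eventually.of_forall fun x => hΦy.nonneg _ (norm_nonneg _)
      have heq2 : ENNReal.ofReal (∫ x, Φ (norm (u x)) ∂μ) =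
          ∫⁻ x, ENNReal.ofReal (Φ (norm (u x))) ∂μ :=
        ofReal_integral_eq_lintegral_ofReal hIint hnn
      have hle : ∫⁻ x, ENNReal.ofReal (Φ (norm (u x))) ∂μ ≤ ENNReal.ofReal (Φ 1) := by
        calc ∫⁻ x, ENNReal.ofReal (Φ (norm (u x))) ∂μ
            = ∫⁻ x, ENNReal.ofReal (Φ (|norm (f x)| / lam)) ∂μ := by
              apply lintegral_congr
              intro x
              rw [abs_of_nonneg (norm_nonneg _), huabs x]
        _ ≤ ENNReal.ofReal (Φ 1) := hlammod
      rw [← heq2] at hle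
      exact (ENNReal.ofReal_le_ofReal_iff hΦ10).mp hle
    have hFfu : ∀ π, Ff μ k E u π = Ff μ k E f π / lam := by
      intro π
      rw [hu_def, KeyAux2.Ff_smul, Complex.norm_real, Real.norm_eq_abs,
        abs_of_pos (inv_pos.mpr hlam0), inv_mul_eq_div]
    have hFfdiv : ∀ π, Ff μ k E f π / (r₀ * lam) = Ff μ k E u π / r₀ := by
      intro π
      rw [hFfu π, div_div, mul_comm lam r₀]
    have ht0 : ∀ π, 0 ≤ Ff μ k E u π := fun π => KeyAux2.Ff_nonneg u π
    have ht1 : ∀ π, Ff μ k E u π ≤ 1 := by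
      intro π
      calc Ff μ k E u π ≤ (∫ x, Φ (norm (u x)) ∂μ) + Ψ 1 :=
            KeyAux2.Ff_le_mod hsys hpair hum hub hIint π
      _ ≤ Φ 1 + Ψ 1 := by linarith
      _ = 1 := hnorm
    -- the real sum bound
    have hreal : (∑ π ∈ Λ, Ψ (Ff μ k E f π / (r₀ * lam)) * (k π : ℝ) * (d π : ℝ)) ≤ Ψ 1 := by
      rcases eq_or_lt_of_le hΨ10 with hΨ1z | hΨ1pos
      · -- Ψ 1 = 0
        have hzero : ∀ π ∈ Λ, Ψ (Ff μ k E f π / (r₀ * lam)) * (k π : ℝ) * (d π : ℝ) = 0 := by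
          intro π _
          have harg : Ff μ k E f π / (r₀ * lam) ≤ 1 := by
            rw [hFfdiv π]
            calc Ff μ k E u π / r₀ ≤ Ff μ k E u π / 1 :=
                  div_le_div_of_nonneg_left (ht0 π) one_pos hr₀1
            _ = Ff μ k E u π := div_one _
            _ ≤ 1 := ht1 π
          have hargnn : 0 ≤ Ff μ k E f π / (r₀ * lam) := by
            rw [hFfdiv π]
            exact div_nonneg (ht0 π) hr₀0.le
          have h1 : Ψ (Ff μ k E f π / (r₀ * lam)) ≤ Ψ 1 :=
            KeyAux.IsYoung.mono hΨy hargnn harg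
          have h2 : 0 ≤ Ψ (Ff μ k E f π / (r₀ * lam)) := hΨy.nonneg _ hargnn
          rw [le_antisymm (h1.trans_eq hΨ1z.symm) h2]
          ring
        rw [Finset.sum_congr rfl hzero, Finset.sum_const_zero]
        linarith
      · -- Ψ 1 > 0
        have hX0pos : 0 < X0 := by
          rw [hX0_def]
          apply Real.rpow_pos_of_pos
          positivity
        have hr₀X : X0 ≤ r₀ := le_max_right _ _
        have hrpow : X0 ^ (p+1) ≤ r₀ ^ (p+1) := Real.rpow_le_rpow hX0pos.le hr₀X (by linarith)
        have hX0val : X0 ^ (p+1) = c₁ * Cstar / Ψ 1 := by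
          rw [hX0_def, ← Real.rpow_mul (by positivity), one_div_mul_cancel hp1.ne',
            Real.rpow_one]
        have hM := hcentral u (B / lam) hum hub hmodu Λ
        have hterm : ∀ π ∈ Λ, Ψ (Ff μ k E f π / (r₀ * lam)) * (k π : ℝ) * (d π : ℝ) ≤
            (c₁ / r₀ ^ (p+1)) * ((k π : ℝ) * (d π : ℝ) * (Ff μ k E u π) ^ (p+1)) := by
          intro π _
          rw [hFfdiv π]
          have h1 : Ψ (Ff μ k E u π / r₀) ≤ c₁ * (Ff μ k E u π / r₀) ^ (p+1) :=
            hpsi _ (div_nonneg (ht0 π) hr₀0.le)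
          have h2 : (Ff μ k E u π / r₀) ^ (p+1) =
              (Ff μ k E u π) ^ (p+1) / r₀ ^ (p+1) :=
            Real.div_rpow (ht0 π) hr₀0.le (p+1)
          calc Ψ (Ff μ k E u π / r₀) * (k π : ℝ) * (d π : ℝ)
              ≤ (c₁ * (Ff μ k E u π / r₀) ^ (p+1)) * (k π : ℝ) * (d π : ℝ) :=
                mul_le_mul_of_nonneg_right
                  (mul_le_mul_of_nonneg_right h1 (Nat.cast_nonneg _)) (Nat.cast_nonneg _)
          _ = (c₁ / r₀ ^ (p+1)) * ((k π : ℝ) * (d π : ℝ) * (Ff μ k E u π) ^ (p+1)) := by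
                rw [h2]
                ring
        calc ∑ π ∈ Λ, Ψ (Ff μ k E f π / (r₀ * lam)) * (k π : ℝ) * (d π : ℝ)
            ≤ ∑ π ∈ Λ, (c₁ / r₀ ^ (p+1)) *
              ((k π : ℝ) * (d π : ℝ) * (Ff μ k E u π) ^ (p+1)) := Finset.sum_le_sum hterm
        _ = (c₁ / r₀ ^ (p+1)) * ∑ π ∈ Λ,
              (k π : ℝ) * (d π : ℝ) * (Ff μ k E u π) ^ (p+1) := by rw [Finset.mul_sum]
        _ ≤ (c₁ / r₀ ^ (p+1)) * Cstar := by
              apply mul_le_mul_of_nonneg_left hM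
              positivity
        _ = c₁ * Cstar / r₀ ^ (p+1) := by ring
        _ ≤ c₁ * Cstar / X0 ^ (p+1) :=
              div_le_div_of_nonneg_left (by positivity)
                (Real.rpow_pos_of_pos hX0pos _) hrpow
        _ = Ψ 1 := by
              rw [hX0val]
              field_simp
    -- gauge membership
    have hmem : 0 < r₀ * lam ∧
        ∑' π, ENNReal.ofReal (Ψ (Ff μ k E f π / (r₀ * lam))) * (k π : ℝ≥0∞) * (d π : ℝ≥0∞) ≤
          ENNReal.ofReal (Ψ 1) := by
      refine ⟨by positivity, ?_⟩
      have hzero_out : ∀ π ∉ Λ,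
          ENNReal.ofReal (Ψ (Ff μ k E f π / (r₀ * lam))) * (k π : ℝ≥0∞) * (d π : ℝ≥0∞) = 0 := by
        intro π hπ
        rw [hf_def, KeyAux2.Ff_trigPoly_not_mem hsys Λ c π hπ, zero_div, hΨy.zero,
          ENNReal.ofReal_zero, zero_mul, zero_mul]
      rw [tsum_eq_sum hzero_out]
      have hargnn : ∀ π, 0 ≤ Ψ (Ff μ k E f π / (r₀ * lam)) := by
        intro π
        apply hΨy.nonneg
        apply div_nonneg _ (by positivity)
        exact div_nonneg (KeyAux.hsNorm_nonneg _) (Real.sqrt_nonneg _)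
      calc ∑ π ∈ Λ, ENNReal.ofReal (Ψ (Ff μ k E f π / (r₀ * lam))) *
            (k π : ℝ≥0∞) * (d π : ℝ≥0∞)
          = ∑ π ∈ Λ, ENNReal.ofReal
              (Ψ (Ff μ k E f π / (r₀ * lam)) * (k π : ℝ) * (d π : ℝ)) := by
            refine Finset.sum_congr rfl fun π _ => ?_
            rw [ENNReal.ofReal_mul (mul_nonneg (hargnn π) (Nat.cast_nonneg _)),
              ENNReal.ofReal_mul (hargnn π), ENNReal.ofReal_natCast, ENNReal.ofReal_natCast]
      _ = ENNReal.ofReal (∑ π ∈ Λ, Ψ (Ff μ k E f π / (r₀ * lam)) * (k π : ℝ) * (d π : ℝ)) :=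
            (ENNReal.ofReal_sum_of_nonneg fun π _ =>
              mul_nonneg (mul_nonneg (hargnn π) (Nat.cast_nonneg _)) (Nat.cast_nonneg _)).symm
      _ ≤ ENNReal.ofReal (Ψ 1) := ENNReal.ofReal_le_ofReal hreal
    -- conclude via sInf
    rw [gaugeNorm]
    apply csInf_le ⟨0, fun y hy => hy.1.le⟩
    exact hmem
  -- wrap up
  have hgauge_div : gaugeNorm d k Ψ (Ff μ k E f) / r₀ ≤ luxNorm μ Φ f := by
    rw [luxNorm, luxNormR]
    apply le_csInf hTne
    intro lam hlam
    rw [div_le_iff₀ hr₀0]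
    calc gaugeNorm d k Ψ (Ff μ k E f) ≤ r₀ * lam := hmain lam hlam.1 hlam.2
    _ = lam * r₀ := mul_comm _ _
  calc gaugeNorm d k Ψ (Ff μ k E f)
      = gaugeNorm d k Ψ (Ff μ k E f) / r₀ * r₀ := by field_simp
  _ ≤ luxNorm μ Φ f * r₀ := mul_le_mul_of_nonneg_right hgauge_div hr₀0.le
  _ = r₀ * luxNorm μ Φ f := mul_comm _ _

end
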